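/- arXiv:1702.03667 — 5 statements merged into one kernel-verified Lean document; each statement's English description precedes it below -/
import Mathlib

section
/- Assume liminf_{n→∞} d0/ln n ≥ 1 (i.e., d0 ≥ (1+o(1)) ln n). Then E|SMALL| = o(n^{1/3}) and with high probability |SMALL| ≤ n^{1/3}. Moreover, if in addition d0 ≥ 2 ln n for all sufficiently large n, then with high probability SMALL = ∅. -/
open MeasureTheory Filter

noncomputable def bern (p : ℝ) : Measure Bool :=
  (PMF.bernoulli (min (Real.toNNReal p) 1) (min_le_right _ _)).toMeasure

/-- The random intersection graph model: the sample space is the bipartite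
choice structure `ω : Fin n → Fin m → Bool`, where `ω v w = true` means vertex `v`
chose feature `w`, each choice made independently with probability `p`. -/
noncomputable def rig (n m : ℕ) (p : ℝ) : Measure (Fin n → Fin m → Bool) :=
  Measure.pi fun _ => Measure.pi fun _ => bern p

/-- The intersection graph determined by the choices `ω`:
two distinct vertices are adjacent iff they share a feature. -/
def rigGraph {n m : ℕ} (ω : Fin n → Fin m → Bool) : SimpleGraph (Fin n) where
  Adj v v' := v ≠ v' ∧ ∃ w, ω v w = true ∧ ω v' w = true
  symm := ⟨by rintro v v' ⟨h, w, h1, h2⟩; exact ⟨h.symm, w, h2, h1⟩⟩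
  loopless := ⟨by rintro v ⟨h, -⟩; exact h rfl⟩

/-- degree of `v` in the intersection graph -/
noncomputable def deg {n m : ℕ} (ω : Fin n → Fin m → Bool) (v : Fin n) : ℕ :=
  Set.ncard {u | (rigGraph ω).Adj v u}

/-- `W(v)`: number of features chosen by `v` -/
noncomputable def Wv {n m : ℕ} (ω : Fin n → Fin m → Bool) (v : Fin n) : ℕ :=
  Set.ncard {w | ω v w = true}

/-- `V(w)`: number of vertices choosing feature `w` -/
noncomputable def Vw {n m : ℕ} (ω : Fin n → Fin m → Bool) (w : Fin m) : ℕ :=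
  Set.ncard {v | ω v w = true}

/-- `W'(v)`: number of features chosen by `v` that are chosen by at least two vertices -/
noncomputable def Wv' {n m : ℕ} (ω : Fin n → Fin m → Bool) (v : Fin n) : ℕ :=
  Set.ncard {w | ω v w = true ∧ 2 ≤ Set.ncard {u | ω u w = true}}

/-- `W(S)`: number of features chosen by at least one vertex of `S` -/
noncomputable def WS {n m : ℕ} (ω : Fin n → Fin m → Bool) (S : Set (Fin n)) : ℕ :=
  Set.ncard {w | ∃ v ∈ S, ω v w = true}

/-- `V(R)`: number of vertices choosing at least one feature of `R` -/
noncomputable def VR {n m : ℕ} (ω : Fin n → Fin m → Bool) (R : Set (Fin m)) : ℕ :=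
  Set.ncard {v | ∃ w ∈ R, ω v w = true}

/-- `W''(K)`: number of features chosen by at least two vertices of `K` -/
noncomputable def WSpp {n m : ℕ} (ω : Fin n → Fin m → Bool) (K : Set (Fin n)) : ℕ :=
  Set.ncard {w | 2 ≤ Set.ncard {v | v ∈ K ∧ ω v w = true}}

/-- `N(S)`: number of vertices outside `S` adjacent to at least one vertex of `S` -/
noncomputable def NS {n m : ℕ} (ω : Fin n → Fin m → Bool) (S : Set (Fin n)) : ℕ :=
  Set.ncard {u | u ∉ S ∧ ∃ v ∈ S, (rigGraph ω).Adj v u}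

noncomputable def d0 (n m : ℕ) (p : ℝ) : ℝ := m * p * (1 - (1 - p) ^ (n - 1))

noncomputable def d1 (n m : ℕ) (p : ℝ) : ℝ := n * m * p ^ 2

section AuxRIG

instance (p : ℝ) : IsProbabilityMeasure (bern p) := PMF.toMeasure.isProbabilityMeasure _

lemma bern_singleton {p : ℝ} (hp : p ∈ Set.Ioo (0:ℝ) 1) (b : Bool) :
    bern p {b} = ENNReal.ofReal (if b then p else 1 - p) := by
  have h1 : Real.toNNReal p ≤ 1 := Real.toNNReal_le_one.mpr hp.2.le
  have hmin : min (Real.toNNReal p) 1 = Real.toNNReal p := min_eq_left h1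
  have hc : ((Real.toNNReal p : NNReal) : ENNReal) = ENNReal.ofReal p := rfl
  rw [bern, PMF.toMeasure_apply_singleton _ _ (measurableSet_singleton b)]
  simp only [hmin, PMF.bernoulli_apply, hc]
  cases b with
  | true => simp; rfl
  | false =>
    simp only [Bool.cond_false]
    rw [ENNReal.coe_sub, ENNReal.coe_one, show ((1:ENNReal) - ↑(Real.toNNReal p)) = ENNReal.ofReal (1-p) by
      rw [hc, ← ENNReal.ofReal_one, ← ENNReal.ofReal_sub _ hp.1.le]]
    simp

lemma nu_cyl {n : ℕ} {p : ℝ} (hp : p ∈ Set.Ioo (0:ℝ) 1) (v : Fin n) :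
    (Measure.pi fun _ : Fin n => bern p) {c | c v = true} = ENNReal.ofReal p := by
  have : {c : Fin n → Bool | c v = true}
      = Set.pi Set.univ (fun u => if u = v then {true} else Set.univ) := by
    ext c
    simp only [Set.mem_setOf_eq, Set.mem_pi, Set.mem_univ, forall_true_left]
    constructor
    · intro h u; by_cases hu : u = v <;> simp [hu, h]
    · intro h; have := h v; simpa using this
  rw [this, Measure.pi_pi]
  have : ∀ u : Fin n, bern p (if u = v then ({true} : Set Bool) else Set.univ)
      = if u = v then ENNReal.ofReal p else 1 := by
    intro u; by_cases hu : u = v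
    · simp [hu, bern_singleton hp]
    · rw [if_neg hu, if_neg hu]; exact measure_univ
  simp only [this]
  simp

lemma nu_single {n : ℕ} {p : ℝ} (hp : p ∈ Set.Ioo (0:ℝ) 1) (v : Fin n) :
    (Measure.pi fun _ : Fin n => bern p) {fun u => decide (u = v)}
      = ENNReal.ofReal p * (ENNReal.ofReal (1 - p)) ^ (n - 1) := by
  rw [← Set.univ_pi_singleton (fun u => decide (u = v)), Measure.pi_pi]
  have hv : ∀ u : Fin n, bern p {decide (u = v)}
      = if u = v then ENNReal.ofReal p else ENNReal.ofReal (1 - p) := by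
    intro u; by_cases hu : u = v <;> simp [hu, bern_singleton hp]
  simp only [hv]
  rw [← Finset.mul_prod_erase Finset.univ _ (Finset.mem_univ v), if_pos rfl]
  congr 1
  rw [Finset.prod_ite_of_false]
  · rw [Finset.prod_const, Finset.card_erase_of_mem (Finset.mem_univ v), Finset.card_univ,
      Fintype.card_fin]
  · intro u hu; exact Finset.ne_of_mem_erase hu

/-- the per-column event: feature chosen by `v` and by at least two vertices -/
def colE (n : ℕ) (v : Fin n) : Set (Fin n → Bool) :=
  {c | c v = true ∧ 2 ≤ Set.ncard {u | c u = true}}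

lemma colE_eq {n : ℕ} (v : Fin n) :
    colE n v = {c | c v = true} \ {fun u => decide (u = v)} := by
  ext c
  simp only [colE, Set.mem_setOf_eq, Set.mem_diff, Set.mem_singleton_iff]
  constructor
  · rintro ⟨h1, h2⟩
    refine ⟨h1, fun hc => ?_⟩
    subst hc
    have : {u : Fin n | decide (u = v) = true} = {v} := by ext u; simp
    rw [this, Set.ncard_singleton] at h2
    omega
  · rintro ⟨h1, h2⟩
    refine ⟨h1, ?_⟩
    have : ∃ u, u ≠ v ∧ c u = true := by
      by_contra h
      push_neg at h
      apply h2
      funext u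
      by_cases hu : u = v
      · simp [hu, h1]
      · have h' := h u
        simp only [hu, ne_eq, not_false_eq_true, true_and, not_true_eq_false,
          Bool.not_eq_true] at h'
        simp [hu, h']
    obtain ⟨u, hu, hcu⟩ := this
    have hfin : {u : Fin n | c u = true}.Finite := Set.toFinite _
    rw [show (2:ℕ) = 1 + 1 by rfl]
    rw [Nat.succ_le_iff] -- 1 < ncard
    exact (Set.one_lt_ncard_iff hfin).mpr ⟨v, u, h1, hcu, (Ne.symm hu)⟩

lemma nu_colE {n : ℕ} {p : ℝ} (hp : p ∈ Set.Ioo (0:ℝ) 1) (v : Fin n) :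
    (Measure.pi fun _ : Fin n => bern p) (colE n v)
      = ENNReal.ofReal (p * (1 - (1 - p) ^ (n - 1))) := by
  set ν := Measure.pi fun _ : Fin n => bern p
  have hsub : ({fun u => decide (u = v)} : Set (Fin n → Bool)) ⊆ {c | c v = true} := by
    rintro c rfl; simp
  rw [colE_eq, measure_diff hsub ((Set.toFinite _).measurableSet.nullMeasurableSet)
    (measure_ne_top _ _), nu_cyl hp, nu_single hp]
  have h1p : (0:ℝ) ≤ 1 - p := by linarith [hp.2.le]
  have hq : p * (1 - (1 - p) ^ (n - 1)) = p - p * (1 - p) ^ (n - 1) := by ring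
  have key : ENNReal.ofReal (p - p * (1 - p) ^ (n - 1))
      = ENNReal.ofReal p - ENNReal.ofReal p * (ENNReal.ofReal (1 - p)) ^ (n - 1) := by
    rw [ENNReal.ofReal_sub _ (mul_nonneg hp.1.le (pow_nonneg h1p _)),
      ENNReal.ofReal_mul hp.1.le, ENNReal.ofReal_pow h1p]
  rw [hq, key]

lemma pi_singleton_apply {ι : Type*} [Fintype ι] {α : ι → Type*} [∀ i, MeasurableSpace (α i)]
    (μ : ∀ i, Measure (α i)) [∀ i, SigmaFinite (μ i)] (f : ∀ i, α i) :
    Measure.pi μ {f} = ∏ i, μ i {f i} := by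
  rw [← Set.univ_pi_singleton, Measure.pi_pi]

lemma rig_eq_map (n m : ℕ) (p : ℝ) :
    rig n m p = Measure.map (fun σ (v : Fin n) (w : Fin m) => σ w v)
      (Measure.pi fun _ : Fin m => Measure.pi fun _ : Fin n => bern p) := by
  apply Measure.ext_of_singleton
  intro ω
  rw [Measure.map_apply (measurable_of_countable _) (measurableSet_singleton ω)]
  have hpre : (fun σ (v : Fin n) (w : Fin m) => σ w v) ⁻¹' {ω} = {fun w v => ω v w} := by
    ext σ
    simp only [Set.mem_preimage, Set.mem_singleton_iff, funext_iff]
    exact ⟨fun h w v => h v w, fun h v w => h w v⟩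
  rw [hpre, rig, pi_singleton_apply, pi_singleton_apply]
  simp_rw [pi_singleton_apply]
  exact Finset.prod_comm

lemma integral_pi_pow {α : Type*} [MeasurableSpace α] (ν : Measure α) [IsProbabilityMeasure ν]
    (m : ℕ) (f : α → ℝ) :
    ∫ σ : Fin m → α, ∏ w, f (σ w) ∂(Measure.pi fun _ => ν) = (∫ x, f x ∂ν) ^ m := by
  letI : MeasureSpace α := ⟨ν⟩
  haveI : SigmaFinite (volume : Measure α) := inferInstanceAs (SigmaFinite ν)
  simpa using MeasureTheory.integral_fintype_prod_eq_pow (ι := Fin m) f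

open scoped Classical
lemma Wv'_transpose {n m : ℕ} (σ : Fin m → Fin n → Bool) (v : Fin n) :
    Wv' (fun v w => σ w v) v = ∑ w : Fin m, (if σ w ∈ colE n v then 1 else 0) := by
  classical
  rw [Wv']
  have h1 : {w : Fin m | σ w v = true ∧ 2 ≤ Set.ncard {u | σ w u = true}}
      = ↑(Finset.univ.filter (fun w => σ w ∈ colE n v)) := by
    ext w; simp only [Finset.coe_filter, Finset.mem_univ, true_and, Set.mem_setOf_eq, colE]
  rw [h1, Set.ncard_coe_finset, Finset.card_filter]

lemma col_mgf {n : ℕ} {p : ℝ} (hp : p ∈ Set.Ioo (0:ℝ) 1) (v : Fin n) (t : ℝ) :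
    ∫ c, Real.exp (t * (if c ∈ colE n v then (1:ℝ) else 0))
        ∂(Measure.pi fun _ : Fin n => bern p)
      = 1 + (Real.exp t - 1) * (p * (1 - (1 - p) ^ (n - 1))) := by
  classical
  have hq0 : (0:ℝ) ≤ p * (1 - (1 - p) ^ (n - 1)) := by
    have h1 : (1 - p) ^ (n - 1) ≤ 1 :=
      pow_le_one₀ (by linarith [hp.2.le]) (by linarith [hp.1.le])
    nlinarith [hp.1.le]
  have hmeas : MeasurableSet (colE n v) := (Set.toFinite _).measurableSet
  have hfun : (fun c => Real.exp (t * (if c ∈ colE n v then (1:ℝ) else 0)))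
      = fun c => Set.indicator (colE n v) (fun _ => Real.exp t - 1) c + 1 := by
    funext c; by_cases hc : c ∈ colE n v <;> simp [hc]
  rw [hfun, integral_add (Integrable.of_finite) (integrable_const 1),
    integral_indicator_const _ hmeas, integral_const]
  rw [measureReal_def, nu_colE hp v]
  simp [ENNReal.toReal_ofReal hq0]
  ring

lemma vertex_bound {n m : ℕ} {p : ℝ} (hp : p ∈ Set.Ioo (0:ℝ) 1) (v : Fin n) :
    (rig n m p {ω | ((Wv' ω v : ℝ)) ≤ 0.1 * d0 n m p}).toReal
      ≤ Real.exp (-(0.9 - 0.1 * Real.log 10) * d0 n m p) := by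
  classical
  set q : ℝ := p * (1 - (1 - p) ^ (n - 1)) with hq
  have h1pow : (1 - p) ^ (n - 1) ≤ 1 :=
    pow_le_one₀ (by linarith [hp.2.le]) (by linarith [hp.1.le])
  have h1pow0 : 0 ≤ (1 - p) ^ (n - 1) := pow_nonneg (by linarith [hp.2.le]) _
  have hq0 : 0 ≤ q := by nlinarith [hp.1.le]
  have hq1 : q ≤ 1 := by nlinarith [hp.1.le, hp.2.le]
  have hd0 : d0 n m p = m * q := by rw [d0, hq]; ring
  set t : ℝ := -Real.log 10 with hts
  have ht : t ≤ 0 := neg_nonpos.mpr (Real.log_nonneg (by norm_num))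
  haveI : IsProbabilityMeasure (rig n m p) := by rw [rig]; infer_instance
  have hint : Integrable (fun ω => Real.exp (t * (Wv' ω v : ℝ))) (rig n m p) :=
    Integrable.of_finite
  have chern := ProbabilityTheory.measure_le_le_exp_mul_mgf (μ := rig n m p)
    (X := fun ω => (Wv' ω v : ℝ)) (0.1 * d0 n m p) ht hint
  have hmgf : ProbabilityTheory.mgf (fun ω => (Wv' ω v : ℝ)) (rig n m p) t
      = (1 + (Real.exp t - 1) * q) ^ m := by
    rw [ProbabilityTheory.mgf, rig_eq_map,
      integral_map (measurable_of_countable _).aemeasurable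
        (Measurable.aestronglyMeasurable (measurable_of_countable _))]
    have hexp : ∀ σ : Fin m → Fin n → Bool,
        Real.exp (t * ((Wv' (fun v w => σ w v) v : ℕ) : ℝ))
          = ∏ w : Fin m, Real.exp (t * (if σ w ∈ colE n v then (1:ℝ) else 0)) := by
      intro σ
      rw [Wv'_transpose, ← Real.exp_sum]
      congr 1
      rw [← Finset.mul_sum]
      congr 1
      push_cast
      congr 1
    simp_rw [hexp]
    rw [integral_pi_pow (Measure.pi fun _ : Fin n => bern p) m
      (fun c => Real.exp (t * (if c ∈ colE n v then (1:ℝ) else 0))), col_mgf hp v t]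
  rw [hmgf] at chern
  have hexp_t : Real.exp t = (10:ℝ)⁻¹ := by
    rw [hts, Real.exp_neg, Real.exp_log]; norm_num
  have hbase : 1 + (Real.exp t - 1) * q = 1 - 0.9 * q := by rw [hexp_t]; ring
  have hb0 : (0:ℝ) ≤ 1 - 0.9 * q := by nlinarith
  have hb : (1 - 0.9 * q) ≤ Real.exp (-(0.9 * q)) := by
    have := Real.add_one_le_exp (-(0.9 * q)); linarith
  have hpow : (1 + (Real.exp t - 1) * q) ^ m ≤ Real.exp (-(0.9 * q)) ^ m := by
    rw [hbase]; exact pow_le_pow_left₀ hb0 hb m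
  have hpow2 : Real.exp (-(0.9 * q)) ^ m = Real.exp (-(0.9 * (m * q))) := by
    rw [← Real.exp_nat_mul]; ring_nf
  calc (rig n m p {ω | ((Wv' ω v : ℝ)) ≤ 0.1 * d0 n m p}).toReal
      ≤ Real.exp (-t * (0.1 * d0 n m p)) * (1 + (Real.exp t - 1) * q) ^ m := chern
    _ ≤ Real.exp (-t * (0.1 * d0 n m p)) * Real.exp (-(0.9 * (m * q))) := by
        rw [← hpow2]; exact mul_le_mul_of_nonneg_left hpow (Real.exp_pos _).le
    _ = Real.exp (-(0.9 - 0.1 * Real.log 10) * d0 n m p) := by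
        rw [← Real.exp_add, hd0, hts]; ring_nf

lemma integral_card_small (n m : ℕ) (p : ℝ) :
    ∫ ω, (Set.ncard {v | (Wv' ω v : ℝ) ≤ 0.1 * d0 n m p} : ℝ) ∂(rig n m p)
      = ∑ v : Fin n, (rig n m p {ω | (Wv' ω v : ℝ) ≤ 0.1 * d0 n m p}).toReal := by
  classical
  haveI : IsProbabilityMeasure (rig n m p) := by rw [rig]; infer_instance
  have h1 : ∀ ω : Fin n → Fin m → Bool,
      ((Set.ncard {v | (Wv' ω v : ℝ) ≤ 0.1 * d0 n m p} : ℕ) : ℝ)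
        = ∑ v : Fin n, if (Wv' ω v : ℝ) ≤ 0.1 * d0 n m p then (1:ℝ) else 0 := by
    intro ω
    have : {v | (Wv' ω v : ℝ) ≤ 0.1 * d0 n m p}
        = ↑(Finset.univ.filter fun v => (Wv' ω v : ℝ) ≤ 0.1 * d0 n m p) := by
      ext v; simp
    rw [this, Set.ncard_coe_finset, Finset.card_filter]
    push_cast
    exact Finset.sum_congr rfl fun v _ => by split <;> norm_num
  simp_rw [h1]
  rw [integral_finset_sum _ (fun v _ => Integrable.of_finite)]
  refine Finset.sum_congr rfl fun v _ => ?_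
  have h2 : (fun ω : Fin n → Fin m → Bool =>
      if (Wv' ω v : ℝ) ≤ 0.1 * d0 n m p then (1:ℝ) else 0)
      = Set.indicator {ω | (Wv' ω v : ℝ) ≤ 0.1 * d0 n m p} (fun _ => (1:ℝ)) := by
    funext ω; by_cases hω : (Wv' ω v : ℝ) ≤ 0.1 * d0 n m p <;> simp [hω]
  rw [h2, integral_indicator_const _ ((Set.toFinite _).measurableSet)]
  simp
  rfl

lemma exp_small_le (n m : ℕ) {p : ℝ} (hp : p ∈ Set.Ioo (0:ℝ) 1) :
    ∫ ω, (Set.ncard {v | (Wv' ω v : ℝ) ≤ 0.1 * d0 n m p} : ℝ) ∂(rig n m p)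
      ≤ n * Real.exp (-(0.9 - 0.1 * Real.log 10) * d0 n m p) := by
  rw [integral_card_small]
  calc ∑ v : Fin n, (rig n m p {ω | (Wv' ω v : ℝ) ≤ 0.1 * d0 n m p}).toReal
      ≤ ∑ _v : Fin n, Real.exp (-(0.9 - 0.1 * Real.log 10) * d0 n m p) :=
        Finset.sum_le_sum fun v _ => vertex_bound hp v
    _ = n * Real.exp (-(0.9 - 0.1 * Real.log 10) * d0 n m p) := by
        rw [Finset.sum_const, Finset.card_univ, Fintype.card_fin, nsmul_eq_mul]

lemma exp_small_nonneg (n m : ℕ) (p : ℝ) :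
    0 ≤ ∫ ω, (Set.ncard {v | (Wv' ω v : ℝ) ≤ 0.1 * d0 n m p} : ℝ) ∂(rig n m p) :=
  integral_nonneg fun ω => by positivity

lemma log10_lt : Real.log 10 < 2.3105 := by
  have h2 : Real.log 2 < 0.6931471808 := Real.log_two_lt_d9
  have hlt : ((10:ℝ) ^ (3:ℕ)) < 2 ^ (10:ℕ) := by norm_num
  have := Real.log_lt_log (by positivity) hlt
  rw [Real.log_pow, Real.log_pow] at this
  push_cast at this
  linarith

lemma log10_pos : 0 < Real.log 10 := Real.log_pos (by norm_num)

lemma rpow_isLittleO_nat {a b : ℝ} (h : a < b) :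
    (fun n : ℕ => (n:ℝ) ^ a) =o[atTop] fun n : ℕ => (n:ℝ) ^ b := by
  have hreal : (fun x : ℝ => x ^ a) =o[atTop] fun x : ℝ => x ^ b := by
    rw [Asymptotics.isLittleO_iff_tendsto']
    · have : ∀ᶠ x : ℝ in atTop, x ^ a / x ^ b = x ^ (a - b) := by
        filter_upwards [eventually_gt_atTop (0:ℝ)] with x hx
        rw [Real.rpow_sub hx]
      refine Tendsto.congr' (this.mono fun x hx => hx.symm) ?_
      have hb : 0 < b - a := by linarith
      simpa [neg_sub] using tendsto_rpow_neg_atTop hb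
    · filter_upwards [eventually_ge_atTop (1:ℝ)] with x hx hx0
      exfalso
      have : (0:ℝ) < x ^ b := Real.rpow_pos_of_pos (by linarith) b
      rw [hx0] at this; exact lt_irrefl 0 this
  exact hreal.comp_tendsto tendsto_natCast_atTop_atTop

lemma d0_nonneg (n m : ℕ) {p : ℝ} (hp : p ∈ Set.Ioo (0:ℝ) 1) : 0 ≤ d0 n m p := by
  have h1 : (1 - p) ^ (n - 1) ≤ 1 :=
    pow_le_one₀ (by linarith [hp.2.le]) (by linarith [hp.1.le])
  have : (0:ℝ) ≤ m := Nat.cast_nonneg m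
  rw [d0]
  exact mul_nonneg (mul_nonneg (Nat.cast_nonneg m) hp.1.le) (by linarith)

lemma prob_toReal_compl {α : Type*} [MeasurableSpace α] (μ : Measure α)
    [IsProbabilityMeasure μ] {s : Set α} (hs : MeasurableSet s) :
    (μ s).toReal = 1 - (μ sᶜ).toReal := by
  have h := prob_compl_eq_one_sub (μ := μ) hs
  have h1 : μ s ≤ 1 := prob_le_one
  have : (μ sᶜ).toReal = 1 - (μ s).toReal := by
    rw [h, ENNReal.toReal_sub_of_le h1 ENNReal.one_ne_top, ENNReal.toReal_one]
  linarith

theorem small_set_size (m : ℕ → ℕ) (p : ℕ → ℝ)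
    (hp : ∀ n, p n ∈ Set.Ioo (0 : ℝ) 1)
    (hd0 : 1 ≤ Filter.liminf (fun (n : ℕ) => d0 n (m n) (p n) / Real.log n) atTop) :
    ((fun (n : ℕ) => ∫ ω, (Set.ncard {v | (Wv' ω v : ℝ) ≤ 0.1 * d0 n (m n) (p n)} : ℝ)
        ∂(rig n (m n) (p n))) =o[atTop] fun (n : ℕ) => (n : ℝ) ^ ((1 : ℝ) / 3)) ∧
    Tendsto (fun (n : ℕ) => (rig n (m n) (p n)
        {ω | (Set.ncard {v | (Wv' ω v : ℝ) ≤ 0.1 * d0 n (m n) (p n)} : ℝ)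
          ≤ (n : ℝ) ^ ((1 : ℝ) / 3)}).toReal) atTop (nhds 1) ∧
    ((∀ᶠ (n : ℕ) in atTop, 2 * Real.log n ≤ d0 n (m n) (p n)) →
      Tendsto (fun (n : ℕ) => (rig n (m n) (p n)
          {ω | {v | (Wv' ω v : ℝ) ≤ 0.1 * d0 n (m n) (p n)} = ∅}).toReal)
        atTop (nhds 1)) := by
  classical
  haveI : ∀ n, IsProbabilityMeasure (rig n (m n) (p n)) := fun n => by
    rw [rig]; infer_instance
  set c : ℝ := 0.9 - 0.1 * Real.log 10 with hcdef
  clear_value c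
  have hlog10 : Real.log 10 < 2.3105 := log10_lt
  have hcgt : 0.66895 < c := by rw [hcdef]; linarith
  have hc1 : (2:ℝ)/3 < 0.997 * c := by nlinarith
  have hc2 : 1 - 2*c < 0 := by nlinarith
  set E : ℕ → ℝ := fun n =>
    ∫ ω, (Set.ncard {v | (Wv' ω v : ℝ) ≤ 0.1 * d0 n (m n) (p n)} : ℝ)
      ∂(rig n (m n) (p n)) with hEdef
  have hE_le : ∀ n, E n ≤ n * Real.exp (-c * d0 n (m n) (p n)) := by
    intro n; rw [hcdef]; exact exp_small_le n (m n) (hp n)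
  have hE0 : ∀ n, 0 ≤ E n := fun n => exp_small_nonneg n (m n) (p n)
  -- eventual lower bound on d0
  have hbdd : Filter.IsBoundedUnder (· ≥ ·) atTop
      (fun n : ℕ => d0 n (m n) (p n) / Real.log n) := by
    refine isBoundedUnder_of ⟨0, fun n => ?_⟩
    refine div_nonneg (d0_nonneg n (m n) (hp n)) ?_
    rcases Nat.eq_zero_or_pos n with h | h
    · simp [h]
    · exact Real.log_natCast_nonneg n
  have hev : ∀ᶠ n : ℕ in atTop, (0.997:ℝ) < d0 n (m n) (p n) / Real.log n :=
    eventually_lt_of_lt_liminf (lt_of_lt_of_le (by norm_num) hd0) hbdd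
  have hd0ev : ∀ᶠ n : ℕ in atTop, 0.997 * Real.log n ≤ d0 n (m n) (p n) := by
    filter_upwards [hev, eventually_ge_atTop 2] with n h1 h2
    have hlogpos : 0 < Real.log n := by
      apply Real.log_pos
      exact_mod_cast Nat.lt_of_lt_of_le (by norm_num) h2
    have := (lt_div_iff₀ hlogpos).mp h1
    linarith
  -- generic bound: if a * log n ≤ d0 then E n ≤ n ^ (1 - a * c)
  have hgen : ∀ (a : ℝ), 0 < a → ∀ n : ℕ, 1 ≤ n → a * Real.log n ≤ d0 n (m n) (p n) →
      E n ≤ (n:ℝ) ^ (1 - a * c) := by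
    intro a ha n hn hd
    have hnpos : (0:ℝ) < n := by exact_mod_cast hn
    have step1 : E n ≤ n * Real.exp (-c * d0 n (m n) (p n)) := hE_le n
    have step2 : Real.exp (-c * d0 n (m n) (p n)) ≤ Real.exp (Real.log n * (-(a*c))) := by
      apply Real.exp_le_exp.mpr
      nlinarith
    have step3 : Real.exp (Real.log n * (-(a*c))) = (n:ℝ) ^ (-(a*c)) :=
      (Real.rpow_def_of_pos hnpos _).symm
    calc E n ≤ n * Real.exp (-c * d0 n (m n) (p n)) := step1
      _ ≤ n * (n:ℝ) ^ (-(a*c)) := by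
          rw [← step3]; exact mul_le_mul_of_nonneg_left step2 hnpos.le
      _ = (n:ℝ) ^ ((1:ℝ)) * (n:ℝ) ^ (-(a*c)) := by rw [Real.rpow_one]
      _ = (n:ℝ) ^ (1 - a*c) := by rw [← Real.rpow_add hnpos]; ring_nf
  -- Part 1
  have part1 : (fun n : ℕ => E n) =o[atTop] fun n : ℕ => (n:ℝ) ^ ((1:ℝ)/3) := by
    have hEb : ∀ᶠ n : ℕ in atTop, E n ≤ (n:ℝ) ^ (1 - 0.997 * c) := by
      filter_upwards [hd0ev, eventually_ge_atTop 1] with n h1 h2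
      exact hgen 0.997 (by norm_num) n h2 h1
    have hBigO : (fun n : ℕ => E n) =O[atTop] fun n : ℕ => (n:ℝ) ^ (1 - 0.997 * c) := by
      rw [Asymptotics.isBigO_iff]
      refine ⟨1, ?_⟩
      filter_upwards [hEb] with n h
      rw [one_mul, Real.norm_eq_abs, Real.norm_eq_abs, abs_of_nonneg (hE0 n),
        abs_of_nonneg (Real.rpow_nonneg (Nat.cast_nonneg n) _)]
      exact h
    exact hBigO.trans_isLittleO (rpow_isLittleO_nat (by linarith))
  refine ⟨part1, ?_, ?_⟩
  -- Part 2
  · have hcompl0 : Tendsto (fun n : ℕ => (rig n (m n) (p n)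
        {ω | (Set.ncard {v | (Wv' ω v : ℝ) ≤ 0.1 * d0 n (m n) (p n)} : ℝ)
          ≤ (n : ℝ) ^ ((1 : ℝ) / 3)}ᶜ).toReal) atTop (nhds 0) := by
      apply squeeze_zero' (Eventually.of_forall fun n => ENNReal.toReal_nonneg)
        (g := fun n : ℕ => E n / (n:ℝ) ^ ((1:ℝ)/3))
      · filter_upwards [eventually_ge_atTop 1] with n hn
        have hnpos : (0:ℝ) < (n:ℝ) ^ ((1:ℝ)/3) :=
          Real.rpow_pos_of_pos (by exact_mod_cast hn) _
        have hsub : {ω : Fin n → Fin (m n) → Bool |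
            (Set.ncard {v | (Wv' ω v : ℝ) ≤ 0.1 * d0 n (m n) (p n)} : ℝ)
              ≤ (n : ℝ) ^ ((1 : ℝ) / 3)}ᶜ
            ⊆ {ω | (n : ℝ) ^ ((1 : ℝ) / 3)
                ≤ (Set.ncard {v | (Wv' ω v : ℝ) ≤ 0.1 * d0 n (m n) (p n)} : ℝ)} := by
          intro ω hω
          simp only [Set.mem_compl_iff, Set.mem_setOf_eq, not_le] at hω ⊢
          exact hω.le
        have hmono := measure_mono (μ := rig n (m n) (p n)) hsub
        have hmarkov := mul_meas_ge_le_integral_of_nonneg (μ := rig n (m n) (p n))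
          (f := fun ω => (Set.ncard {v | (Wv' ω v : ℝ) ≤ 0.1 * d0 n (m n) (p n)} : ℝ))
          (ae_of_all _ fun ω => by positivity) Integrable.of_finite ((n : ℝ) ^ ((1:ℝ)/3))
        have htr : (rig n (m n) (p n)
            {ω | (Set.ncard {v | (Wv' ω v : ℝ) ≤ 0.1 * d0 n (m n) (p n)} : ℝ)
              ≤ (n : ℝ) ^ ((1 : ℝ) / 3)}ᶜ).toReal
            ≤ (rig n (m n) (p n) {ω | (n : ℝ) ^ ((1 : ℝ) / 3)
                ≤ (Set.ncard {v | (Wv' ω v : ℝ) ≤ 0.1 * d0 n (m n) (p n)} : ℝ)}).toReal :=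
          ENNReal.toReal_mono (measure_ne_top _ _) hmono
        refine htr.trans ?_
        rw [le_div_iff₀ hnpos, mul_comm]
        exact hmarkov
      · exact part1.tendsto_div_nhds_zero
    have key : ∀ n : ℕ, (rig n (m n) (p n)
        {ω | (Set.ncard {v | (Wv' ω v : ℝ) ≤ 0.1 * d0 n (m n) (p n)} : ℝ)
          ≤ (n : ℝ) ^ ((1 : ℝ) / 3)}).toReal
        = 1 - (rig n (m n) (p n)
        {ω | (Set.ncard {v | (Wv' ω v : ℝ) ≤ 0.1 * d0 n (m n) (p n)} : ℝ)
          ≤ (n : ℝ) ^ ((1 : ℝ) / 3)}ᶜ).toReal :=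
      fun n => prob_toReal_compl _ ((Set.toFinite _).measurableSet)
    simp_rw [key]
    simpa using tendsto_const_nhds.sub hcompl0
  -- Part 3
  · intro h2ln
    have hcompl0 : Tendsto (fun n : ℕ => (rig n (m n) (p n)
        {ω | {v | (Wv' ω v : ℝ) ≤ 0.1 * d0 n (m n) (p n)} = ∅}ᶜ).toReal) atTop (nhds 0) := by
      apply squeeze_zero' (Eventually.of_forall fun n => ENNReal.toReal_nonneg)
        (g := fun n : ℕ => (n:ℝ) ^ (1 - 2*c))
      · filter_upwards [h2ln, eventually_ge_atTop 1] with n hd hn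
        have hEn : E n ≤ (n:ℝ) ^ (1 - 2*c) := hgen 2 (by norm_num) n hn hd
        have hsub : {ω : Fin n → Fin (m n) → Bool |
            {v | (Wv' ω v : ℝ) ≤ 0.1 * d0 n (m n) (p n)} = ∅}ᶜ
            ⊆ {ω | (1:ℝ)
                ≤ (Set.ncard {v | (Wv' ω v : ℝ) ≤ 0.1 * d0 n (m n) (p n)} : ℝ)} := by
          intro ω hω
          simp only [Set.mem_compl_iff, Set.mem_setOf_eq] at hω ⊢
          have hne : {v | (Wv' ω v : ℝ) ≤ 0.1 * d0 n (m n) (p n)}.Nonempty :=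
            Set.nonempty_iff_ne_empty.mpr hω
          have : 0 < Set.ncard {v | (Wv' ω v : ℝ) ≤ 0.1 * d0 n (m n) (p n)} :=
            (Set.ncard_pos (Set.toFinite _)).mpr hne
          exact_mod_cast this
        have hmono := measure_mono (μ := rig n (m n) (p n)) hsub
        have hmarkov := mul_meas_ge_le_integral_of_nonneg (μ := rig n (m n) (p n))
          (f := fun ω => (Set.ncard {v | (Wv' ω v : ℝ) ≤ 0.1 * d0 n (m n) (p n)} : ℝ))
          (ae_of_all _ fun ω => by positivity) Integrable.of_finite 1
        rw [one_mul] at hmarkov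
        calc (rig n (m n) (p n)
            {ω | {v | (Wv' ω v : ℝ) ≤ 0.1 * d0 n (m n) (p n)} = ∅}ᶜ).toReal
            ≤ (rig n (m n) (p n) {ω | (1:ℝ)
                ≤ (Set.ncard {v | (Wv' ω v : ℝ) ≤ 0.1 * d0 n (m n) (p n)} : ℝ)}).toReal :=
              ENNReal.toReal_mono (measure_ne_top _ _) hmono
          _ ≤ E n := hmarkov
          _ ≤ (n:ℝ) ^ (1 - 2*c) := hEn
      · have h0 : (0:ℝ) < 2*c - 1 := by linarith
        have := (tendsto_rpow_neg_atTop h0).comp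
          (tendsto_natCast_atTop_atTop (R := ℝ))
        convert this using 2 with n
        rw [Function.comp_apply, neg_sub]
    have key : ∀ n : ℕ, (rig n (m n) (p n)
        {ω | {v | (Wv' ω v : ℝ) ≤ 0.1 * d0 n (m n) (p n)} = ∅}).toReal
        = 1 - (rig n (m n) (p n)
        {ω | {v | (Wv' ω v : ℝ) ≤ 0.1 * d0 n (m n) (p n)} = ∅}ᶜ).toReal :=
      fun n => prob_toReal_compl _ ((Set.toFinite _).measurableSet)
    simp_rw [key]
    simpa using tendsto_const_nhds.sub hcompl0

end AuxRIG
end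

section
/- Assume d1 = nmp² → ∞ as n → ∞. Then the probability that there exists a set K ⊆ V with 2 ≤ |K| ≤ n/d1³ and W''(K) ≥ 2|K| tends to 0; equivalently, with high probability every K ⊆ V with |K| ≤ n/d1³ satisfies W''(K) ≤ 2|K|. -/
open MeasureTheory Filter

open scoped ENNReal

namespace RIG

instance (p : ℝ) : IsProbabilityMeasure (bern p) := by unfold bern; infer_instance
instance (n m : ℕ) (p : ℝ) : IsProbabilityMeasure (rig n m p) := by unfold rig; infer_instance

noncomputable def θ (p : ℝ) : Bool → ℝ≥0∞ :=
  fun b => cond b (ENNReal.ofReal p) (1 - ENNReal.ofReal p)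

noncomputable def cmass (p : ℝ) {n : ℕ} (c : Fin n → Bool) : ℝ≥0∞ := ∏ v, θ p (c v)

noncomputable def mass (p : ℝ) {n m : ℕ} (ω : Fin n → Fin m → Bool) : ℝ≥0∞ :=
  ∏ v, cmass p (fun w => ω v w)

theorem sum_biUnion_le {β α : Type*} [DecidableEq β] [DecidableEq α]
    (s : Finset β) (t : β → Finset α) (f : α → ℝ≥0∞) :
    ∑ x ∈ s.biUnion t, f x ≤ ∑ b ∈ s, ∑ x ∈ t b, f x := by
  induction s using Finset.induction_on with
  | empty => simp
  | insert _ _ ha ih =>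
      rw [Finset.biUnion_insert, Finset.sum_insert ha]
      calc ∑ x ∈ _ ∪ _, f x ≤ ∑ x ∈ t _ ∪ _, f x + ∑ x ∈ t _ ∩ _, f x := le_self_add
        _ = ∑ x ∈ t _, f x + ∑ x ∈ _, f x := Finset.sum_union_inter
        _ ≤ _ := by gcongr

lemma bern_singleton {p : ℝ} (hp1 : p ≤ 1) (b : Bool) : bern p {b} = θ p b := by
  unfold bern
  rw [PMF.toMeasure_apply_singleton _ _ (measurableSet_singleton b)]
  have : min (Real.toNNReal p) 1 = Real.toNNReal p :=
    min_eq_left (Real.toNNReal_le_one.2 hp1)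
  cases b <;> simp [PMF.bernoulli, this, θ, ENNReal.ofReal, ENNReal.coe_sub]

lemma innerpi_singleton {m : ℕ} {p : ℝ} (hp1 : p ≤ 1) (c : Fin m → Bool) :
    (Measure.pi fun _ : Fin m => bern p) {c} = cmass p c := by
  rw [← Set.univ_pi_singleton c, Measure.pi_pi]
  simp [cmass, bern_singleton hp1]

lemma rig_singleton {n m : ℕ} {p : ℝ} (hp1 : p ≤ 1) (ω : Fin n → Fin m → Bool) :
    rig n m p {ω} = mass p ω := by
  unfold rig
  rw [← Set.univ_pi_singleton ω, Measure.pi_pi]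
  simp [mass, innerpi_singleton hp1]

lemma rig_apply {n m : ℕ} {p : ℝ} (hp1 : p ≤ 1) (s : Set (Fin n → Fin m → Bool)) :
    rig n m p s = ∑ ω ∈ (Set.toFinite s).toFinset, mass p ω := by
  have hs : s = ⋃ x ∈ ((Set.toFinite s).toFinset : Finset _), ({x} : Set _) := by simp
  conv_lhs => rw [hs]
  rw [measure_biUnion_finset]
  · exact Finset.sum_congr rfl fun ω _ => rig_singleton hp1 ω
  · intro x _ y _ hxy
    simp [Function.onFun, Set.disjoint_singleton_left, hxy]
  · exact fun i _ => measurableSet_singleton i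

lemma sum_theta {p : ℝ} (hp1 : p ≤ 1) : ∑ b : Bool, θ p b = 1 := by
  rw [Fintype.sum_bool]
  exact add_tsub_cancel_of_le (ENNReal.ofReal_le_one.2 hp1)

lemma sum_cmass_subset {n : ℕ} (p : ℝ) (t : Fin n → Finset Bool) :
    ∑ c ∈ Fintype.piFinset t, cmass p c = ∏ v, ∑ b ∈ t v, θ p b := by
  unfold cmass
  rw [Finset.prod_univ_sum]

lemma sum_cmass {n : ℕ} {p : ℝ} (hp1 : p ≤ 1) : ∑ c : Fin n → Bool, cmass p c = 1 := by
  have h : (Finset.univ : Finset (Fin n → Bool)) = Fintype.piFinset (fun _ => Finset.univ) := by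
    ext; simp
  have hb : θ p true + θ p false = 1 := by
    have := sum_theta hp1; rwa [Fintype.sum_bool] at this
  rw [h, sum_cmass_subset]
  simp [Fintype.sum_bool, hb]

/-- The key independence/factorization identity. -/
lemma rig_colEvents {n m : ℕ} {p : ℝ} (hp1 : p ≤ 1) (S : Fin m → Finset (Fin n → Bool)) :
    rig n m p {ω | ∀ w, (fun v => ω v w) ∈ S w} = ∏ w, ∑ c ∈ S w, cmass p c := by
  classical
  rw [rig_apply hp1, Finset.prod_univ_sum]
  refine Finset.sum_nbij' (fun ω => fun w v => ω v w) (fun η => fun v w => η w v) ?_ ?_ ?_ ?_ ?_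
  · intro ω hω
    rw [Set.Finite.mem_toFinset] at hω
    exact Fintype.mem_piFinset.2 hω
  · intro η hη
    rw [Set.Finite.mem_toFinset]
    exact fun w => Fintype.mem_piFinset.1 hη w
  · intro ω _; rfl
  · intro η _; rfl
  · intro ω _
    unfold mass cmass
    exact Finset.prod_comm

section Fixed
variable {n m : ℕ} {p : ℝ}

/-- the column event: at least two vertices of `F` choose the feature -/
noncomputable def Dcol (F : Finset (Fin n)) : Finset (Fin n → Bool) :=
  Finset.univ.filter (fun c => 2 ≤ (F.filter (fun v => c v = true)).card)

lemma sum_pair_event (hp0 : 0 ≤ p) (hp1 : p ≤ 1) {u v : Fin n} (huv : u ≠ v) :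
    ∑ c ∈ Finset.univ.filter (fun c : Fin n → Bool => c u = true ∧ c v = true), cmass p c
      = (ENNReal.ofReal p) ^ 2 := by
  classical
  have hset : Finset.univ.filter (fun c : Fin n → Bool => c u = true ∧ c v = true)
      = Fintype.piFinset (fun x => if x = u ∨ x = v then {true} else Finset.univ) := by
    ext c
    simp only [Finset.mem_filter, Finset.mem_univ, true_and, Fintype.mem_piFinset]
    constructor
    · rintro ⟨h1, h2⟩ x
      by_cases hx : x = u ∨ x = v
      · rw [if_pos hx]
        rcases hx with rfl | rfl <;> simp [h1, h2]
      · rw [if_neg hx]; simp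
    · intro h
      refine ⟨?_, ?_⟩
      · have := h u; rw [if_pos (Or.inl rfl)] at this; simpa using this
      · have := h v; rw [if_pos (Or.inr rfl)] at this; simpa using this
  rw [hset, sum_cmass_subset]
  have : ∀ x : Fin n, (∑ b ∈ (if x = u ∨ x = v then ({true} : Finset Bool) else Finset.univ), θ p b)
      = if x ∈ ({u, v} : Finset (Fin n)) then ENNReal.ofReal p else 1 := by
    intro x
    by_cases hx : x = u ∨ x = v
    · rw [if_pos hx, if_pos (by simp [Finset.mem_insert, hx])]
      simp [θ]
    · rw [if_neg hx, if_neg (by simp [Finset.mem_insert]; tauto), sum_theta hp1]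
  rw [Finset.prod_congr rfl (fun x _ => this x), Finset.prod_ite_mem, Finset.univ_inter,
    Finset.prod_pair huv, sq]

lemma sum_Dcol_le (hp0 : 0 ≤ p) (hp1 : p ≤ 1) (F : Finset (Fin n)) :
    ∑ c ∈ Dcol F, cmass p c ≤ (F.card : ℝ≥0∞) ^ 2 * (ENNReal.ofReal p) ^ 2 := by
  classical
  have hsub : Dcol F ⊆ F.offDiag.biUnion
      (fun uv => Finset.univ.filter (fun c : Fin n → Bool => c uv.1 = true ∧ c uv.2 = true)) := by
    intro c hc
    rw [Dcol, Finset.mem_filter] at hc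
    obtain ⟨a, ha, b, hb, hab⟩ := Finset.one_lt_card.1 hc.2
    rw [Finset.mem_filter] at ha hb
    exact Finset.mem_biUnion.2 ⟨(a, b), Finset.mem_offDiag.2 ⟨ha.1, hb.1, hab⟩,
      by simp [ha.2, hb.2]⟩
  calc ∑ c ∈ Dcol F, cmass p c ≤ ∑ c ∈ F.offDiag.biUnion _, cmass p c :=
        Finset.sum_le_sum_of_subset hsub
    _ ≤ ∑ uv ∈ F.offDiag, ∑ c ∈ Finset.univ.filter
          (fun c : Fin n → Bool => c uv.1 = true ∧ c uv.2 = true), cmass p c :=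
        sum_biUnion_le _ _ _
    _ = ∑ uv ∈ F.offDiag, (ENNReal.ofReal p) ^ 2 := by
        refine Finset.sum_congr rfl fun uv huv => ?_
        exact sum_pair_event hp0 hp1 (Finset.mem_offDiag.1 huv).2.2
    _ = (F.offDiag.card : ℝ≥0∞) * (ENNReal.ofReal p) ^ 2 := by
        rw [Finset.sum_const, nsmul_eq_mul]
    _ ≤ (F.card : ℝ≥0∞) ^ 2 * (ENNReal.ofReal p) ^ 2 := by
        gcongr
        rw [Finset.offDiag_card]
        calc ((F.card * F.card - F.card : ℕ) : ℝ≥0∞) ≤ ((F.card * F.card : ℕ) : ℝ≥0∞) := by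
              exact_mod_cast Nat.cast_le.2 (Nat.sub_le _ _)
          _ = (F.card : ℝ≥0∞) ^ 2 := by push_cast; ring

lemma ncard_filter_eq (F : Finset (Fin n)) (c : Fin n → Bool) :
    Set.ncard {v | v ∈ (↑F : Set (Fin n)) ∧ c v = true}
      = (F.filter (fun v => c v = true)).card := by
  rw [show {v | v ∈ (↑F : Set (Fin n)) ∧ c v = true}
      = ↑(F.filter (fun v => c v = true)) from by ext x; simp, Set.ncard_coe_finset]

lemma rig_allR (hp0 : 0 ≤ p) (hp1 : p ≤ 1) (F : Finset (Fin n)) (R : Finset (Fin m)) :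
    rig n m p {ω | ∀ w ∈ R, (fun v => ω v w) ∈ Dcol F}
      ≤ ((F.card : ℝ≥0∞) ^ 2 * (ENNReal.ofReal p) ^ 2) ^ R.card := by
  classical
  have hset : {ω : Fin n → Fin m → Bool | ∀ w ∈ R, (fun v => ω v w) ∈ Dcol F}
      = {ω | ∀ w, (fun v => ω v w) ∈ (if w ∈ R then Dcol F else Finset.univ)} := by
    ext ω
    simp only [Set.mem_setOf_eq]
    constructor
    · intro h w
      by_cases hw : w ∈ R
      · rw [if_pos hw]; exact h w hw
      · rw [if_neg hw]; exact Finset.mem_univ _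
    · intro h w hw
      have := h w; rwa [if_pos hw] at this
  rw [hset, rig_colEvents hp1]
  have : ∀ w : Fin m, (∑ c ∈ (if w ∈ R then Dcol F else Finset.univ), cmass p c)
      = if w ∈ R then (∑ c ∈ Dcol F, cmass p c) else 1 := by
    intro w
    by_cases hw : w ∈ R
    · rw [if_pos hw, if_pos hw]
    · rw [if_neg hw, if_neg hw, sum_cmass hp1]
  rw [Finset.prod_congr rfl (fun w _ => this w), Finset.prod_ite_mem, Finset.univ_inter,
    Finset.prod_const]
  exact pow_le_pow_left' (sum_Dcol_le hp0 hp1 F) _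

lemma badF_bound (hp0 : 0 ≤ p) (hp1 : p ≤ 1) (F : Finset (Fin n)) :
    rig n m p {ω | 2 * F.card < WSpp ω ↑F}
      ≤ (m.choose (2 * F.card + 1) : ℝ≥0∞)
          * ((F.card : ℝ≥0∞) ^ 2 * (ENNReal.ofReal p) ^ 2) ^ (2 * F.card + 1) := by
  classical
  have hsub : {ω : Fin n → Fin m → Bool | 2 * F.card < WSpp ω ↑F}
      ⊆ ⋃ R ∈ Finset.powersetCard (2 * F.card + 1) (Finset.univ : Finset (Fin m)),
          {ω | ∀ w ∈ R, (fun v => ω v w) ∈ Dcol F} := by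
    intro ω hω
    simp only [Set.mem_setOf_eq] at hω
    set W2 := {w : Fin m | 2 ≤ Set.ncard {v | v ∈ (↑F : Set (Fin n)) ∧ ω v w = true}} with hW2
    have hfin : W2.Finite := Set.toFinite _
    have hcard : 2 * F.card + 1 ≤ hfin.toFinset.card := by
      rw [← Set.ncard_eq_toFinset_card _ hfin]
      exact hω
    obtain ⟨R, hRsub, hRcard⟩ := Finset.exists_subset_card_eq hcard
    refine Set.mem_biUnion (Finset.mem_powersetCard_univ.2 hRcard) ?_
    intro w hw
    have hwW2 : w ∈ W2 := hfin.mem_toFinset.1 (hRsub hw)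
    rw [hW2, Set.mem_setOf_eq, ncard_filter_eq] at hwW2
    exact Finset.mem_filter.2 ⟨Finset.mem_univ _, hwW2⟩
  calc rig n m p {ω | 2 * F.card < WSpp ω ↑F}
      ≤ rig n m p (⋃ R ∈ Finset.powersetCard (2 * F.card + 1) (Finset.univ : Finset (Fin m)),
          {ω | ∀ w ∈ R, (fun v => ω v w) ∈ Dcol F}) := measure_mono hsub
    _ ≤ ∑ R ∈ Finset.powersetCard (2 * F.card + 1) (Finset.univ : Finset (Fin m)),
          rig n m p {ω | ∀ w ∈ R, (fun v => ω v w) ∈ Dcol F} := measure_biUnion_finset_le _ _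
    _ ≤ ∑ R ∈ Finset.powersetCard (2 * F.card + 1) (Finset.univ : Finset (Fin m)),
          ((F.card : ℝ≥0∞) ^ 2 * (ENNReal.ofReal p) ^ 2) ^ (2 * F.card + 1) := by
        refine Finset.sum_le_sum fun R hR => ?_
        have := rig_allR (p := p) hp0 hp1 F R
        rwa [(Finset.mem_powersetCard.1 hR).2] at this
    _ = _ := by
        rw [Finset.sum_const, nsmul_eq_mul, Finset.card_powersetCard, Finset.card_univ,
          Fintype.card_fin]

end Fixed


lemma pow_self_le (b : ℕ) : ((b:ℝ))^b ≤ 3^b * (Nat.factorial b) := by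
  have h1 : ((b:ℝ))^b / (Nat.factorial b) ≤ Real.exp b := by
    calc ((b:ℝ))^b / (Nat.factorial b)
        ≤ ∑ i ∈ Finset.range (b+1), (b:ℝ)^i / (Nat.factorial i) :=
          Finset.single_le_sum (f := fun i => (b:ℝ)^i / (Nat.factorial i))
            (fun i _ => by positivity) (by simp)
      _ ≤ Real.exp b := Real.sum_le_exp_of_nonneg (by positivity) _
  have hf : (0:ℝ) < Nat.factorial b := by positivity
  rw [div_le_iff₀ hf] at h1
  calc ((b:ℝ))^b ≤ Real.exp b * Nat.factorial b := h1
    _ ≤ 3^b * Nat.factorial b := by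
        gcongr
        rw [show ((b:ℝ)) = b * 1 by ring, Real.exp_nat_mul]
        exact pow_le_pow_left₀ (Real.exp_pos 1).le
          (by have := Real.exp_one_lt_d9; linarith) b

lemma choose_le_real (a b : ℕ) (hb : 1 ≤ b) : (a.choose b : ℝ) ≤ (3*a/b)^b := by
  have h1 : (a.choose b : ℝ) ≤ (a:ℝ)^b / (Nat.factorial b) := Nat.choose_le_pow_div b a
  have hb0 : (0:ℝ) < b := by exact_mod_cast hb
  have hf : (0:ℝ) < Nat.factorial b := by positivity
  refine h1.trans ?_
  rw [div_pow, mul_pow, div_le_div_iff₀ hf (by positivity)]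
  calc (a:ℝ)^b * (b:ℝ)^b ≤ (a:ℝ)^b * (3^b * Nat.factorial b) := by
        gcongr; exact pow_self_le b
    _ = 3^b * (a:ℝ)^b * Nat.factorial b := by ring

lemma core_ineq1 (N d kr : ℝ) (hN : 0 < N) (hd14 : 14 ≤ d) (hk : 0 < kr)
    (h3 : kr * d^3 ≤ N) : (3*N/kr)*(3*d*kr/(2*N))^2 ≤ 1/2 := by
  have hd0 : (0:ℝ) < d := by linarith
  have heq : (3*N/kr)*(3*d*kr/(2*N))^2 = 27*(d^2*kr)/(4*N) := by
    field_simp; ring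
  rw [heq, div_le_div_iff₀ (by positivity) (by norm_num)]
  nlinarith [mul_le_mul_of_nonneg_left h3 (by norm_num : (0:ℝ) ≤ 4), mul_pos (mul_pos hd0 hd0) hk]

lemma core_ineq2 (N d kr : ℝ) (hN : 0 < N) (hd14 : 14 ≤ d) (hk : 0 < kr)
    (h3 : kr * d^3 ≤ N) : 3*d*kr/(2*N) ≤ 3/(2*d^2) := by
  have hd0 : (0:ℝ) < d := by linarith
  rw [div_le_div_iff₀ (by positivity) (by positivity)]
  nlinarith [h3]

lemma term_bound (n m k : ℕ) (p : ℝ) (hp0 : 0 < p)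
    (hd : 14 ≤ (n:ℝ) * m * p^2) (hk2 : 2 ≤ k)
    (hkx : (k:ℝ) ≤ n / ((n:ℝ) * m * p^2)^3) :
    (n.choose k : ℝ) * (m.choose (2*k+1)) * (((k:ℝ)^2*p^2)^(2*k+1))
      ≤ (1/2)^k * (3/(2*((n:ℝ) * m * p^2)^2)) := by
  have hp2 : 0 < p^2 := by positivity
  have hn0 : n ≠ 0 := by rintro rfl; norm_num at hd
  have hm0 : m ≠ 0 := by rintro rfl; norm_num at hd
  have hNpos : (0:ℝ) < n := Nat.cast_pos.2 (Nat.pos_of_ne_zero hn0)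
  have hMpos : (0:ℝ) < m := Nat.cast_pos.2 (Nat.pos_of_ne_zero hm0)
  have hkpos : (0:ℝ) < k := by exact_mod_cast lt_of_lt_of_le (by norm_num) hk2
  have hdpos : (0:ℝ) < (n:ℝ) * m * p^2 := by positivity
  have hd3 : (k:ℝ) * ((n:ℝ) * m * p^2)^3 ≤ n := by
    rw [← le_div_iff₀ (by positivity)]; exact hkx
  have h1 : (n.choose k : ℝ) ≤ (3*(n:ℝ)/k)^k := choose_le_real n k (by omega)
  have h2 : (m.choose (2*k+1) : ℝ) ≤ (3*(m:ℝ)/(2*(k:ℝ)+1))^(2*k+1) := by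
    have := choose_le_real m (2*k+1) (by omega)
    convert this using 3
    push_cast; ring
  have h3 : (3*(m:ℝ)/(2*(k:ℝ)+1)) * ((k:ℝ)^2*p^2) ≤ 3*((n:ℝ)*m*p^2)*k/(2*(n:ℝ)) := by
    rw [div_mul_eq_mul_div, div_le_div_iff₀ (by positivity) (by positivity)]
    nlinarith [mul_pos (mul_pos hMpos hp2) hkpos, mul_pos hMpos hp2]
  have h4 : (n.choose k : ℝ) * (m.choose (2*k+1)) * (((k:ℝ)^2*p^2)^(2*k+1))
      ≤ (3*(n:ℝ)/k)^k * (3*((n:ℝ)*m*p^2)*k/(2*(n:ℝ)))^(2*k+1) := by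
    calc (n.choose k : ℝ) * (m.choose (2*k+1)) * (((k:ℝ)^2*p^2)^(2*k+1))
        ≤ (3*(n:ℝ)/k)^k * ((3*(m:ℝ)/(2*(k:ℝ)+1))^(2*k+1)) * (((k:ℝ)^2*p^2)^(2*k+1)) := by
          gcongr <;> positivity
      _ = ((3*(m:ℝ)/(2*(k:ℝ)+1)) * ((k:ℝ)^2*p^2))^(2*k+1) * (3*(n:ℝ)/k)^k := by
          rw [mul_pow]; ring
      _ ≤ (3*((n:ℝ)*m*p^2)*k/(2*(n:ℝ)))^(2*k+1) * (3*(n:ℝ)/k)^k := by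
          gcongr
      _ = _ := by ring
  have h5 : (3*(n:ℝ)/k)^k * (3*((n:ℝ)*m*p^2)*k/(2*(n:ℝ)))^(2*k+1)
      = ((3*(n:ℝ)/k) * (3*((n:ℝ)*m*p^2)*k/(2*(n:ℝ)))^2)^k * (3*((n:ℝ)*m*p^2)*k/(2*(n:ℝ))) := by
    rw [mul_pow, pow_succ, pow_mul]
    ring
  have h6 := core_ineq1 (n:ℝ) ((n:ℝ)*m*p^2) k hNpos hd hkpos hd3
  have h7 := core_ineq2 (n:ℝ) ((n:ℝ)*m*p^2) k hNpos hd hkpos hd3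
  calc (n.choose k : ℝ) * (m.choose (2*k+1)) * (((k:ℝ)^2*p^2)^(2*k+1))
      ≤ ((3*(n:ℝ)/k) * (3*((n:ℝ)*m*p^2)*k/(2*(n:ℝ)))^2)^k * (3*((n:ℝ)*m*p^2)*k/(2*(n:ℝ))) := by
        rw [← h5]; exact h4
    _ ≤ (1/2)^k * (3/(2*((n:ℝ) * m * p^2)^2)) := by
        gcongr

section Glue
variable {n m : ℕ} {p : ℝ}

noncomputable def gterm (m : ℕ) (p : ℝ) (k : ℕ) : ℝ :=
  (m.choose (2*k+1) : ℝ) * (((k:ℝ)^2*p^2)^(2*k+1))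

lemma gterm_nonneg (m : ℕ) {p : ℝ} (k : ℕ) : 0 ≤ gterm m p k := by
  unfold gterm; positivity

noncomputable def Kfam (n : ℕ) (x : ℝ) : Finset (Finset (Fin n)) :=
  Finset.univ.filter (fun F => 2 ≤ F.card ∧ (F.card : ℝ) ≤ x)

lemma meas_all (s : Set (Fin n → Fin m → Bool)) : MeasurableSet s :=
  (Set.toFinite s).measurableSet

lemma bad_subset (x : ℝ) :
    {ω : Fin n → Fin m → Bool |
        ¬ ∀ K : Set (Fin n), (K.ncard : ℝ) ≤ x → (WSpp ω K : ℝ) ≤ 2 * K.ncard}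
      ⊆ ⋃ F ∈ Kfam n x, {ω | 2 * F.card < WSpp ω ↑F} := by
  intro ω hω
  simp only [Set.mem_setOf_eq] at hω
  push_neg at hω
  obtain ⟨K, hKx, hKbad⟩ := hω
  have hlt : 2 * K.ncard < WSpp ω K := by exact_mod_cast hKbad
  have hfin : K.Finite := Set.toFinite K
  set F : Finset (Fin n) := hfin.toFinset with hF
  have hco : (↑F : Set (Fin n)) = K := hfin.coe_toFinset
  have hcard : K.ncard = F.card := Set.ncard_eq_toFinset_card K hfin
  have h2K : 2 ≤ K.ncard := by
    have hpos : 0 < WSpp ω K := by omega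
    have hne : WSpp ω K ≠ 0 := hpos.ne'
    obtain ⟨w, hw⟩ := Set.nonempty_of_ncard_ne_zero hne
    simp only [Set.mem_setOf_eq] at hw
    have hsub : {v | v ∈ K ∧ ω v w = true} ⊆ K := fun v h => h.1
    exact hw.trans (Set.ncard_le_ncard hsub hfin)
  refine Set.mem_iUnion₂.2 ⟨F, ?_, ?_⟩
  · rw [Kfam, Finset.mem_filter]
    exact ⟨Finset.mem_univ _, by omega, by rw [← hcard]; exact hKx⟩
  · show 2 * F.card < WSpp ω ↑F
    rw [hco, ← hcard]
    exact hlt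

lemma bad_bound (hp0 : 0 ≤ p) (hp1 : p ≤ 1) (x : ℝ) :
    rig n m p {ω : Fin n → Fin m → Bool |
        ¬ ∀ K : Set (Fin n), (K.ncard : ℝ) ≤ x → (WSpp ω K : ℝ) ≤ 2 * K.ncard}
      ≤ ∑ F ∈ Kfam n x, ENNReal.ofReal (gterm m p F.card) := by
  calc rig n m p _ ≤ rig n m p (⋃ F ∈ Kfam n x, {ω | 2 * F.card < WSpp ω ↑F}) :=
        measure_mono (bad_subset x)
    _ ≤ ∑ F ∈ Kfam n x, rig n m p {ω | 2 * F.card < WSpp ω ↑F} :=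
        measure_biUnion_finset_le _ _
    _ ≤ ∑ F ∈ Kfam n x, ENNReal.ofReal (gterm m p F.card) := by
        refine Finset.sum_le_sum fun F _ => ?_
        refine (badF_bound hp0 hp1 F).trans_eq ?_
        rw [gterm, ENNReal.ofReal_mul (Nat.cast_nonneg _), ENNReal.ofReal_natCast,
          ENNReal.ofReal_pow (by positivity), ENNReal.ofReal_mul (by positivity),
          ENNReal.ofReal_pow hp0]
        congr 2
        rw [ENNReal.ofReal_pow (Nat.cast_nonneg _), ENNReal.ofReal_natCast]

lemma bad_toReal_le (hp0 : 0 ≤ p) (hp1 : p ≤ 1) (x : ℝ) :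
    (rig n m p {ω : Fin n → Fin m → Bool |
        ¬ ∀ K : Set (Fin n), (K.ncard : ℝ) ≤ x → (WSpp ω K : ℝ) ≤ 2 * K.ncard}).toReal
      ≤ ∑ F ∈ Kfam n x, gterm m p F.card := by
  have hb := bad_bound (n := n) (m := m) hp0 hp1 x
  rw [← ENNReal.ofReal_sum_of_nonneg (fun F _ => gterm_nonneg m F.card)] at hb
  have := ENNReal.toReal_mono ENNReal.ofReal_ne_top hb
  rwa [ENNReal.toReal_ofReal (Finset.sum_nonneg fun F _ => gterm_nonneg m F.card)] at this

lemma group_le (x : ℝ) (g : ℕ → ℝ) (hg : ∀ k, 0 ≤ g k) :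
    ∑ F ∈ Kfam n x, g F.card
      ≤ ∑ k ∈ Finset.range (n+1),
          (if 2 ≤ k ∧ (k:ℝ) ≤ x then (n.choose k : ℝ) * g k else 0) := by
  classical
  have hmap : ∀ F ∈ Kfam n x, F.card ∈ Finset.range (n+1) := by
    intro F _
    have : F.card ≤ n := by
      have := Finset.card_le_univ F
      simpa using this
    exact Finset.mem_range.2 (by omega)
  rw [← Finset.sum_fiberwise_of_maps_to hmap (fun F => g F.card)]
  refine Finset.sum_le_sum fun k _ => ?_
  by_cases hc : 2 ≤ k ∧ (k:ℝ) ≤ x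
  · rw [if_pos hc]
    have heq : ∑ F ∈ (Kfam n x).filter (fun F => F.card = k), g F.card
        = (((Kfam n x).filter (fun F => F.card = k)).card : ℝ) * g k := by
      rw [Finset.sum_congr rfl (fun F hF => by rw [(Finset.mem_filter.1 hF).2]),
        Finset.sum_const, nsmul_eq_mul]
    rw [heq]
    have hcardle : ((Kfam n x).filter (fun F => F.card = k)).card ≤ n.choose k := by
      have hsub : (Kfam n x).filter (fun F => F.card = k)
          ⊆ Finset.powersetCard k (Finset.univ : Finset (Fin n)) := by
        intro F hF
        exact Finset.mem_powersetCard_univ.2 (Finset.mem_filter.1 hF).2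
      have := Finset.card_le_card hsub
      rwa [Finset.card_powersetCard, Finset.card_univ, Fintype.card_fin] at this
    exact mul_le_mul_of_nonneg_right (by exact_mod_cast hcardle) (hg k)
  · rw [if_neg hc]
    have hempty : (Kfam n x).filter (fun F => F.card = k) = ∅ := by
      rw [Finset.filter_eq_empty_iff]
      intro F hF hFk
      rw [Kfam, Finset.mem_filter] at hF
      rw [hFk] at hF
      exact hc ⟨hF.2.1, hF.2.2⟩
    simp [hempty]

lemma sum_bound (hp0 : 0 < p) (hd : 14 ≤ (n:ℝ) * m * p^2) :
    ∑ k ∈ Finset.range (n+1),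
        (if 2 ≤ k ∧ (k:ℝ) ≤ (n:ℝ) / ((n:ℝ) * m * p^2)^3
          then (n.choose k : ℝ) * gterm m p k else 0)
      ≤ 3 / ((n:ℝ) * m * p^2)^2 := by
  have hdpos : (0:ℝ) < (n:ℝ) * m * p^2 := lt_of_lt_of_le (by norm_num) hd
  calc ∑ k ∈ Finset.range (n+1),
        (if 2 ≤ k ∧ (k:ℝ) ≤ (n:ℝ) / ((n:ℝ) * m * p^2)^3
          then (n.choose k : ℝ) * gterm m p k else 0)
      ≤ ∑ k ∈ Finset.range (n+1), (1/2:ℝ)^k * (3/(2*((n:ℝ) * m * p^2)^2)) := by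
        refine Finset.sum_le_sum fun k _ => ?_
        by_cases hc : 2 ≤ k ∧ (k:ℝ) ≤ (n:ℝ) / ((n:ℝ) * m * p^2)^3
        · rw [if_pos hc]
          have := term_bound n m k p hp0 hd hc.1 hc.2
          calc (n.choose k : ℝ) * gterm m p k
              = (n.choose k : ℝ) * (m.choose (2*k+1)) * (((k:ℝ)^2*p^2)^(2*k+1)) := by
                rw [gterm]; ring
            _ ≤ _ := this
        · rw [if_neg hc]; positivity
    _ = (∑ k ∈ Finset.range (n+1), (1/2:ℝ)^k) * (3/(2*((n:ℝ) * m * p^2)^2)) :=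
        (Finset.sum_mul _ _ _).symm
    _ ≤ 2 * (3/(2*((n:ℝ) * m * p^2)^2)) := by
        refine mul_le_mul_of_nonneg_right ?_ (by positivity)
        simpa using sum_geometric_two_le (n+1)
    _ = 3 / ((n:ℝ) * m * p^2)^2 := by
        field_simp

end Glue

end RIG

theorem few_doubly_covered_features (m : ℕ → ℕ) (p : ℕ → ℝ)
    (hp : ∀ n, p n ∈ Set.Ioo (0 : ℝ) 1)
    (hd1 : Tendsto (fun (n : ℕ) => d1 n (m n) (p n)) atTop atTop) :
    Tendsto (fun (n : ℕ) => (rig n (m n) (p n)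
        {ω | ∀ K : Set (Fin n),
          (K.ncard : ℝ) ≤ n / (d1 n (m n) (p n)) ^ 3 →
          (WSpp ω K : ℝ) ≤ 2 * K.ncard}).toReal)
      atTop (nhds 1) := by
  set G : ∀ n : ℕ, Set (Fin n → Fin (m n) → Bool) := fun n =>
    {ω | ∀ K : Set (Fin n),
      (K.ncard : ℝ) ≤ n / (d1 n (m n) (p n)) ^ 3 →
      (WSpp ω K : ℝ) ≤ 2 * K.ncard} with hG
  have hBdesc : ∀ n : ℕ, (G n)ᶜ = {ω : Fin n → Fin (m n) → Bool |
      ¬ ∀ K : Set (Fin n), (K.ncard : ℝ) ≤ (n:ℝ) / (d1 n (m n) (p n)) ^ 3 →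
        (WSpp ω K : ℝ) ≤ 2 * K.ncard} := by
    intro n; rfl
  have hbad0 : Tendsto (fun n : ℕ => (rig n (m n) (p n) ((G n)ᶜ)).toReal) atTop (nhds 0) := by
    have hd2 : Tendsto (fun n : ℕ => (d1 n (m n) (p n))^2) atTop atTop := by
      simpa [sq] using hd1.atTop_mul_atTop₀ hd1
    have hlim : Tendsto (fun n : ℕ => 3 / (d1 n (m n) (p n))^2) atTop (nhds 0) :=
      tendsto_const_nhds.div_atTop hd2
    refine squeeze_zero' (Eventually.of_forall fun n => ENNReal.toReal_nonneg) ?_ hlim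
    filter_upwards [hd1.eventually_ge_atTop 14] with n hd14
    have hd14' : 14 ≤ (n:ℝ) * (m n) * (p n)^2 := hd14
    have hp0 := (hp n).1
    have hp1 := (hp n).2
    rw [hBdesc n]
    calc (rig n (m n) (p n) _).toReal
        ≤ ∑ F ∈ RIG.Kfam n ((n:ℝ) / (d1 n (m n) (p n)) ^ 3), RIG.gterm (m n) (p n) F.card :=
          RIG.bad_toReal_le hp0.le hp1.le _
      _ ≤ ∑ k ∈ Finset.range (n+1),
            (if 2 ≤ k ∧ (k:ℝ) ≤ (n:ℝ) / ((n:ℝ) * (m n) * (p n)^2)^3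
              then (n.choose k : ℝ) * RIG.gterm (m n) (p n) k else 0) := by
          have := RIG.group_le (n := n) ((n:ℝ) / (d1 n (m n) (p n)) ^ 3)
            (RIG.gterm (m n) (p n)) (RIG.gterm_nonneg (m n))
          simp only [d1] at this ⊢
          convert this
          rename_i k hk
          by_cases h1 : 2 ≤ k ∧ (k:ℝ) ≤ (n:ℝ) / ((n:ℝ) * (m n) * (p n)^2)^3
          · exact (if_pos h1).trans (if_pos h1).symm
          · exact (if_neg h1).trans (if_neg h1).symm
      _ ≤ 3 / ((n:ℝ) * (m n) * (p n)^2)^2 := RIG.sum_bound hp0 hd14'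
      _ = 3 / (d1 n (m n) (p n))^2 := by rw [d1]
  have hkey : ∀ n : ℕ, (rig n (m n) (p n) (G n)).toReal
      = 1 - (rig n (m n) (p n) ((G n)ᶜ)).toReal := by
    intro n
    have hmc : rig n (m n) (p n) (((G n)ᶜ)ᶜ) = 1 - rig n (m n) (p n) ((G n)ᶜ) :=
      prob_compl_eq_one_sub (RIG.meas_all _)
    rw [compl_compl] at hmc
    rw [hmc, ENNReal.toReal_sub_of_le prob_le_one ENNReal.one_ne_top, ENNReal.toReal_one]
  show Tendsto (fun n : ℕ => (rig n (m n) (p n) (G n)).toReal) atTop (nhds 1)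
  simp only [hkey]
  have : Tendsto (fun n : ℕ => 1 - (rig n (m n) (p n) ((G n)ᶜ)).toReal) atTop (nhds (1 - 0)) :=
    tendsto_const_nhds.sub hbad0
  simpa using this
end

section
/- Assume m ≤ n^{24/25} and liminf_{n→∞} d0/ln n ≥ 1. Then the probability of the event that the minimum degree of G(n,m,p) is at least 2 but smaller than np/2 tends to 0 as n → ∞; i.e., P({δ(G(n,m,p)) ≥ 2} ∩ {δ(G(n,m,p)) ≥ np/2}ᶜ) = o(1). -/
open MeasureTheory Filter

open ENNReal

instance inst_s12 (p : ℝ) : IsProbabilityMeasure (bern p) := PMF.toMeasure.isProbabilityMeasure _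

lemma bern_apply (p : ℝ) (h0 : 0 ≤ p) (h1 : p ≤ 1) (b : Bool) :
    bern p {b} = ENNReal.ofReal (cond b p (1 - p)) := by
  have hmin : min (Real.toNNReal p) 1 = Real.toNNReal p :=
    min_eq_left (Real.toNNReal_le_one.2 h1)
  rw [bern, PMF.toMeasure_apply_singleton _ _ (measurableSet_singleton b),
    PMF.bernoulli_apply, hmin]
  cases b
  · simp [ENNReal.ofReal]
    show 1 - ENNReal.ofReal p = ENNReal.ofReal (1 - p)
    rw [← ENNReal.ofReal_one, ← ENNReal.ofReal_sub _ h0]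
  · rfl

lemma pi_bern_eval (m : ℕ) (p : ℝ) (w : Fin m) (b : Bool) :
    (Measure.pi fun _ : Fin m => bern p) {g | g w = b} = bern p {b} := by
  classical
  have h : {g : Fin m → Bool | g w = b} = Function.eval w ⁻¹' ({b} : Set Bool) := rfl
  rw [h, Set.eval_preimage, Measure.pi_pi]
  rw [Finset.prod_eq_single w (fun j _ hj => by
    rw [Function.update_of_ne hj]; exact measure_univ) (by simp)]
  simp

lemma rig_cyl (n m : ℕ) (p : ℝ) (w : Fin m) (x : Fin n → Bool) :
    rig n m p {ω | ∀ v, ω v w = x v} = ∏ v, bern p {x v} := by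
  have h : {ω : Fin n → Fin m → Bool | ∀ v, ω v w = x v}
      = Set.pi Set.univ (fun v => {g | g w = x v}) := by
    ext ω; simp [Set.mem_pi]
  rw [rig, h, Measure.pi_pi]
  exact Finset.prod_congr rfl fun v _ => pi_bern_eval m p w (x v)

lemma meas_cyl (n m : ℕ) (w : Fin m) (x : Fin n → Bool) :
    MeasurableSet {ω : Fin n → Fin m → Bool | ∀ v, ω v w = x v} := by
  have h : {ω : Fin n → Fin m → Bool | ∀ v, ω v w = x v}
      = ⋂ v, (fun ω : Fin n → Fin m → Bool => ω v w) ⁻¹' {x v} := by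
    ext ω; simp
  rw [h]
  exact MeasurableSet.iInter fun v =>
    ((measurable_pi_apply w).comp (measurable_pi_apply v)) (measurableSet_singleton _)


lemma col_bound (n m : ℕ) (p : ℝ) (h0 : 0 < p) (h1 : p < 1) (w : Fin m) (t : ℝ) :
    rig n m p {ω | (Vw ω w : ℝ) < t}
      ≤ ENNReal.ofReal ((2 : ℝ) ^ t * (1 - p / 2) ^ n) := by
  classical
  set G : Bool → ℝ≥0∞ := fun b => cond b (ENNReal.ofReal (p / 2)) (ENNReal.ofReal (1 - p))
    with hG
  set S : Finset (Fin n → Bool) :=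
    Finset.univ.filter (fun x => ((Set.ncard {v | x v = true} : ℝ) < t)) with hS
  have hE : {ω : Fin n → Fin m → Bool | (Vw ω w : ℝ) < t}
      = ⋃ x ∈ S, {ω | ∀ v, ω v w = x v} := by
    ext ω
    simp only [Set.mem_setOf_eq, Set.mem_iUnion, exists_prop]
    constructor
    · intro h
      exact ⟨fun v => ω v w, by simpa [hS, Vw] using h, fun v => rfl⟩
    · rintro ⟨x, hxS, hx⟩
      have hVw : Vw ω w = Set.ncard {v | x v = true} := by
        unfold Vw; congr 1; ext v; simp only [Set.mem_setOf_eq, hx v]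
      rw [hVw]
      simpa [hS] using hxS
  have hdisj : (S : Set (Fin n → Bool)).PairwiseDisjoint
      (fun x => {ω : Fin n → Fin m → Bool | ∀ v, ω v w = x v}) := by
    intro x _ y _ hxy
    refine Set.disjoint_left.2 fun ω hx hy => hxy ?_
    funext v; rw [← hx v, ← hy v]
  rw [hE, measure_biUnion_finset hdisj fun x _ => meas_cyl n m w x]
  have hterm : ∀ x ∈ S, rig n m p {ω | ∀ v, ω v w = x v}
      ≤ ENNReal.ofReal ((2:ℝ) ^ t) * ∏ v, G (x v) := by
    intro x hxS
    rw [rig_cyl]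
    have hfac : ∀ v, bern p {x v} = (cond (x v) 2 1 : ℝ≥0∞) * G (x v) := by
      intro v
      rw [bern_apply p h0.le h1.le]
      cases x v
      · simp [hG]
      · simp only [hG, Bool.cond_true]
        rw [← ENNReal.ofReal_ofNat 2, ← ENNReal.ofReal_mul (by norm_num)]
        congr 1; ring
    calc ∏ v, bern p {x v} = (∏ v, (cond (x v) 2 1 : ℝ≥0∞)) * ∏ v, G (x v) := by
          rw [← Finset.prod_mul_distrib]; exact Finset.prod_congr rfl fun v _ => hfac v
      _ ≤ ENNReal.ofReal ((2:ℝ) ^ t) * ∏ v, G (x v) := by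
          refine mul_le_mul_left ?_ _
          have hk : ((Finset.univ.filter (fun v => x v = true)).card : ℝ) ≤ t := by
            have hx' : ((Set.ncard {v | x v = true} : ℝ) < t) := by
              simpa [hS] using hxS
            have : {v | x v = true} = ↑(Finset.univ.filter (fun v => x v = true)) := by
              ext v; simp
            rw [this, Set.ncard_coe_finset] at hx'
            exact hx'.le
          calc (∏ v, (cond (x v) 2 1 : ℝ≥0∞))
              = ∏ v, (if x v = true then (2:ℝ≥0∞) else 1) := by
                exact Finset.prod_congr rfl fun v _ => by cases x v <;> simp
            _ = (2:ℝ≥0∞) ^ (Finset.univ.filter (fun v => x v = true)).card := by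
                rw [Finset.prod_ite, Finset.prod_const, Finset.prod_const, one_pow, mul_one]
            _ = ENNReal.ofReal ((2:ℝ) ^ ((Finset.univ.filter (fun v => x v = true)).card : ℕ)) := by
                rw [ENNReal.ofReal_pow (by norm_num)]; norm_num
            _ ≤ ENNReal.ofReal ((2:ℝ) ^ t) := by
                apply ENNReal.ofReal_le_ofReal
                rw [← Real.rpow_natCast 2]
                exact Real.rpow_le_rpow_of_exponent_le (by norm_num) hk
  calc ∑ x ∈ S, rig n m p {ω | ∀ v, ω v w = x v}
      ≤ ∑ x ∈ S, ENNReal.ofReal ((2:ℝ) ^ t) * ∏ v, G (x v) := Finset.sum_le_sum hterm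
    _ ≤ ∑ x : Fin n → Bool, ENNReal.ofReal ((2:ℝ) ^ t) * ∏ v, G (x v) :=
        Finset.sum_le_sum_of_subset (Finset.subset_univ S)
    _ = ENNReal.ofReal ((2:ℝ) ^ t) * ∑ x : Fin n → Bool, ∏ v, G (x v) := by
        rw [Finset.mul_sum]
    _ = ENNReal.ofReal ((2:ℝ) ^ t) * ∏ _v : Fin n, ∑ b : Bool, G b := by
        rw [Fintype.prod_sum]
    _ = ENNReal.ofReal ((2 : ℝ) ^ t * (1 - p / 2) ^ n) := by
        have hsum : ∑ b : Bool, G b = ENNReal.ofReal (1 - p / 2) := by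
          rw [Fintype.sum_bool]
          simp only [hG, Bool.cond_true, Bool.cond_false]
          rw [← ENNReal.ofReal_add (by linarith) (by linarith)]
          ring_nf
        rw [hsum, Finset.prod_const, Finset.card_univ, Fintype.card_fin,
          ← ENNReal.ofReal_pow (by linarith), ← ENNReal.ofReal_mul (Real.rpow_nonneg (by norm_num) t)]


lemma key_bound (n m : ℕ) (p : ℝ) (h0 : 0 < p) (h1 : p < 1) :
    rig n m p {ω | (∀ v, 2 ≤ deg ω v) ∧ ¬(∀ v, (n : ℝ) * p / 2 ≤ (deg ω v : ℝ))}
      ≤ (m : ℝ≥0∞) * ENNReal.ofReal ((2 : ℝ) ^ ((n : ℝ) * p / 2 + 1) * (1 - p / 2) ^ n) := by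
  set t : ℝ := (n : ℝ) * p / 2 + 1 with ht
  have hsub : {ω : Fin n → Fin m → Bool |
        (∀ v, 2 ≤ deg ω v) ∧ ¬(∀ v, (n : ℝ) * p / 2 ≤ (deg ω v : ℝ))}
      ⊆ ⋃ w : Fin m, {ω | (Vw ω w : ℝ) < t} := by
    rintro ω ⟨hall, hex⟩
    push_neg at hex
    obtain ⟨v, hv⟩ := hex
    have h2 := hall v
    have hne : {u | (rigGraph ω).Adj v u}.Nonempty := by
      rw [Set.nonempty_iff_ne_empty]
      intro h
      have : deg ω v = 0 := by rw [deg, h, Set.ncard_empty]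
      omega
    obtain ⟨u, hu⟩ := hne
    obtain ⟨hne', w0, hvw, huw⟩ := hu
    refine Set.mem_iUnion.2 ⟨w0, ?_⟩
    have hsub2 : {u' | ω u' w0 = true} ⊆ insert v {u' | (rigGraph ω).Adj v u'} := by
      intro u' hu'
      by_cases h : u' = v
      · simp [h]
      · exact Set.mem_insert_of_mem _ ⟨fun hh => h hh.symm, w0, hvw, hu'⟩
    have hVd : Vw ω w0 ≤ deg ω v + 1 := by
      calc Vw ω w0 ≤ (insert v {u' | (rigGraph ω).Adj v u'}).ncard :=
            Set.ncard_le_ncard hsub2 (Set.toFinite _)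
        _ ≤ deg ω v + 1 := Set.ncard_insert_le _ _
    show (Vw ω w0 : ℝ) < t
    have h1' : (Vw ω w0 : ℝ) ≤ (deg ω v : ℝ) + 1 := by exact_mod_cast hVd
    rw [ht]; linarith
  calc rig n m p _ ≤ rig n m p (⋃ w : Fin m, {ω | (Vw ω w : ℝ) < t}) := measure_mono hsub
    _ ≤ ∑' w : Fin m, rig n m p {ω | (Vw ω w : ℝ) < t} := measure_iUnion_le _
    _ = ∑ w : Fin m, rig n m p {ω | (Vw ω w : ℝ) < t} := tsum_fintype _
    _ ≤ ∑ _w : Fin m, ENNReal.ofReal ((2 : ℝ) ^ t * (1 - p / 2) ^ n) :=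
        Finset.sum_le_sum fun w _ => col_bound n m p h0 h1 w t
    _ = (m : ℝ≥0∞) * ENNReal.ofReal ((2 : ℝ) ^ t * (1 - p / 2) ^ n) := by
        rw [Finset.sum_const, Finset.card_univ, Fintype.card_fin, nsmul_eq_mul]

set_option maxHeartbeats 1000000 in
theorem min_degree_jump (m : ℕ → ℕ) (p : ℕ → ℝ)
    (hp : ∀ n, p n ∈ Set.Ioo (0 : ℝ) 1)
    (hm : ∀ᶠ (n : ℕ) in atTop, (m n : ℝ) ≤ (n : ℝ) ^ ((24 : ℝ) / 25))
    (hd0 : 1 ≤ Filter.liminf (fun (n : ℕ) => d0 n (m n) (p n) / Real.log n) atTop) :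
    Tendsto (fun (n : ℕ) => (rig n (m n) (p n)
        {ω | (∀ v, 2 ≤ deg ω v) ∧ ¬(∀ v, (n : ℝ) * p n / 2 ≤ (deg ω v : ℝ))}).toReal)
      atTop (nhds 0) := by
  have hlog2 : Real.log 2 < 1 := by
    have := Real.log_two_lt_d9; linarith
  set c : ℝ := (1 - Real.log 2) / 2 with hc
  have hcpos : 0 < c := by rw [hc]; linarith
  -- eventual facts
  have hub : IsBoundedUnder (· ≥ ·) atTop (fun n : ℕ => d0 n (m n) (p n) / Real.log n) := by
    refine isBoundedUnder_of ⟨0, fun n => ?_⟩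
    have h1 : (0:ℝ) ≤ d0 n (m n) (p n) := by
      have hp' := hp n
      have : (1 - p n) ^ (n - 1) ≤ 1 :=
        pow_le_one₀ (by linarith [hp'.2]) (by linarith [hp'.1])
      have hmn : (0:ℝ) ≤ (m n : ℝ) * p n :=
        mul_nonneg (Nat.cast_nonneg _) (hp n).1.le
      rw [d0]; nlinarith
    rcases Nat.eq_zero_or_pos n with h | h
    · simp [h, Real.log_zero]
    · exact div_nonneg h1 (Real.log_nonneg (by exact_mod_cast h))
  have h2 : ∀ᶠ n in atTop, (1:ℝ)/2 < d0 n (m n) (p n) / Real.log n :=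
    eventually_lt_of_lt_liminf (lt_of_lt_of_le (by norm_num) hd0) hub
  have h3 : ∀ᶠ n : ℕ in atTop, (3:ℝ) ≤ (n : ℝ) := by
    filter_upwards [eventually_ge_atTop 3] with n hn
    exact_mod_cast hn
  have h4 : ∀ᶠ n : ℕ in atTop, 4 / c ≤ (n:ℝ) ^ ((1:ℝ)/25) := by
    have := ((tendsto_rpow_atTop (by norm_num : (0:ℝ) < 1/25)).comp
      tendsto_natCast_atTop_atTop (α := ℕ)).eventually_ge_atTop (4 / c)
    exact this
  refine tendsto_of_tendsto_of_tendsto_of_le_of_le' tendsto_const_nhds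
    (tendsto_const_div_atTop_nhds_zero_nat 2)
    (Eventually.of_forall fun n => ENNReal.toReal_nonneg) ?_
  filter_upwards [hm, h2, h3, h4] with n hmn hd2 hn3 hn4
  set P := p n with hP
  set N := (n : ℝ) with hN
  set M := (m n : ℝ) with hM
  set L := Real.log N with hL
  have hp' := hp n
  have hNpos : 0 < N := by linarith
  have hL1 : 1 < L := by
    have h31 : (1:ℝ) < Real.log 3 := by
      rw [Real.lt_log_iff_exp_lt (by norm_num)]
      have := Real.exp_one_lt_d9; linarith
    have := Real.log_le_log (by norm_num : (0:ℝ) < 3) hn3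
    rw [hL]; linarith
  have hLpos : 0 < L := by linarith
  have hd0le : d0 n (m n) P ≤ M * P := by
    have hpow : (0:ℝ) ≤ (1 - P) ^ (n - 1) := pow_nonneg (by linarith [hp'.2]) _
    have hmn' : (0:ℝ) ≤ M * P := mul_nonneg (Nat.cast_nonneg _) hp'.1.le
    rw [d0]; nlinarith
  have hMP : L / 2 < M * P := by
    have := (lt_div_iff₀ hLpos).1 hd2
    linarith
  have hMpos : 0 < M := by nlinarith [hp'.1, hp'.2]
  have hM1 : (1:ℝ) ≤ M := by
    have h0 : m n ≠ 0 := by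
      intro h; rw [hM, h] at hMpos; simp at hMpos
    have h1 : (1:ℕ) ≤ m n := Nat.one_le_iff_ne_zero.2 h0
    rw [hM]; exact_mod_cast h1
  -- N * P lower bound
  have hdivM : N / N ^ ((24:ℝ)/25) ≤ N / M :=
    div_le_div_of_nonneg_left hNpos.le hMpos hmn
  have hrpow : N ^ ((1:ℝ)/25) = N / N ^ ((24:ℝ)/25) := by
    rw [_root_.eq_div_iff (ne_of_gt (by positivity : (0:ℝ) < N ^ ((24:ℝ)/25))), ← Real.rpow_add hNpos]
    norm_num
  have hNP : N ^ ((1:ℝ)/25) * (L/2) ≤ N * P := by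
    have h1 : N ^ ((1:ℝ)/25) * (L/2) ≤ (N / M) * (M * P) := by
      apply mul_le_mul (hrpow ▸ hdivM) hMP.le (by linarith) (by positivity)
    have h2' : (N / M) * (M * P) = N * P := by field_simp
    linarith [h2' ▸ h1]
  have h2L : 2 * L ≤ c * (N * P) := by
    have h5 : (4 / c) * (L/2) ≤ N ^ ((1:ℝ)/25) * (L/2) :=
      mul_le_mul_of_nonneg_right hn4 (by linarith)
    have h6 : c * ((4 / c) * (L/2)) = 2 * L := by field_simp; ring
    nlinarith [mul_le_mul_of_nonneg_left (h5.trans hNP) hcpos.le]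
  -- from key bound to real bound
  have hnonneg : (0:ℝ) ≤ (2 : ℝ) ^ (N * P / 2 + 1) * (1 - P / 2) ^ n :=
    mul_nonneg (Real.rpow_nonneg (by norm_num) _) (pow_nonneg (by linarith [hp'.2]) _)
  have hql : (rig n (m n) P
        {ω | (∀ v, 2 ≤ deg ω v) ∧ ¬(∀ v, N * P / 2 ≤ (deg ω v : ℝ))}).toReal
      ≤ M * ((2:ℝ) ^ (N * P / 2 + 1) * (1 - P/2) ^ n) := by
    have hkey := key_bound n (m n) P hp'.1 hp'.2
    have hne : ((m n : ℝ≥0∞) * ENNReal.ofReal ((2 : ℝ) ^ (N * P / 2 + 1) * (1 - P / 2) ^ n)) ≠ ⊤ :=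
      ENNReal.mul_ne_top (ENNReal.natCast_ne_top _) ENNReal.ofReal_ne_top
    calc _ ≤ ((m n : ℝ≥0∞) * ENNReal.ofReal ((2 : ℝ) ^ (N * P / 2 + 1) * (1 - P / 2) ^ n)).toReal :=
          ENNReal.toReal_mono hne hkey
      _ = M * ((2:ℝ) ^ (N * P / 2 + 1) * (1 - P/2) ^ n) := by
          rw [ENNReal.toReal_mul, ENNReal.toReal_natCast, ENNReal.toReal_ofReal hnonneg]
  -- real estimates
  have e1 : (2:ℝ) ^ (N * P / 2 + 1) = 2 * Real.exp (Real.log 2 * (N * P / 2)) := by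
    rw [Real.rpow_add (by norm_num : (0:ℝ) < 2), Real.rpow_one,
      Real.rpow_def_of_pos (by norm_num : (0:ℝ) < 2)]
    ring
  have e2 : (1 - P/2) ^ n ≤ Real.exp (-(N * P / 2)) := by
    have h' : 1 - P/2 ≤ Real.exp (-(P/2)) := by
      have := Real.add_one_le_exp (-(P/2)); linarith
    calc (1 - P/2) ^ n ≤ (Real.exp (-(P/2))) ^ n :=
          pow_le_pow_left₀ (by linarith [hp'.2]) h' n
      _ = Real.exp (N * -(P/2)) := by rw [← Real.exp_nat_mul]
      _ = Real.exp (-(N * P / 2)) := by ring_nf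
  have e3 : M * ((2:ℝ) ^ (N * P / 2 + 1) * (1 - P/2) ^ n)
      ≤ 2 * M * Real.exp (-(c * (N * P))) := by
    have expeq : Real.exp (Real.log 2 * (N * P / 2)) * Real.exp (-(N * P / 2))
        = Real.exp (-(c * (N * P))) := by
      rw [← Real.exp_add]; congr 1; rw [hc]; ring
    calc M * ((2:ℝ) ^ (N * P / 2 + 1) * (1 - P/2) ^ n)
        ≤ M * (2 * Real.exp (Real.log 2 * (N * P / 2)) * Real.exp (-(N * P / 2))) := by
          rw [e1]
          apply mul_le_mul_of_nonneg_left _ hMpos.le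
          apply mul_le_mul_of_nonneg_left e2 (by positivity)
      _ = 2 * M * Real.exp (-(c * (N * P))) := by rw [← expeq]; ring
  have e4 : 2 * M * Real.exp (-(c * (N * P))) ≤ 2 * M * Real.exp (-(2 * L)) := by
    apply mul_le_mul_of_nonneg_left _ (by linarith)
    exact Real.exp_le_exp.2 (by linarith)
  have hMN : M ≤ N := by
    calc M ≤ N ^ ((24:ℝ)/25) := hmn
      _ ≤ N ^ (1:ℝ) := Real.rpow_le_rpow_of_exponent_le (by linarith) (by norm_num)
      _ = N := Real.rpow_one N
  have e5 : 2 * M * Real.exp (-(2 * L)) ≤ 2 / N := by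
    have hexp : Real.exp (-(2 * L)) = (N * N)⁻¹ := by
      rw [Real.exp_neg, two_mul, Real.exp_add, hL, Real.exp_log hNpos]
    rw [hexp]
    rw [div_eq_mul_inv]
    have : 2 * M * (N * N)⁻¹ ≤ 2 * N * (N * N)⁻¹ := by
      apply mul_le_mul_of_nonneg_right (by linarith) (by positivity)
    calc 2 * M * (N * N)⁻¹ ≤ 2 * N * (N * N)⁻¹ := this
      _ = 2 * N⁻¹ := by field_simp
  calc _ ≤ M * ((2:ℝ) ^ (N * P / 2 + 1) * (1 - P/2) ^ n) := hql
    _ ≤ 2 / N := by linarith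
end

section
/- Let d0 = mp(1-(1-p)^{n-1}) and d1 = nmp², with p ∈ (0,1). Then d0 ≤ mp and d0 ≤ d1. Moreover, for all sufficiently large n: if np > 40 then 0.9·mp ≤ d0 ≤ mp, and if np ≤ 40 then d0 ≤ d1 ≤ 40.1·d0. In addition, d0 ≤ mp·min{np,1} and d1 ≤ 2·d0·max{np,1}. -/
open MeasureTheory Filter

lemma pow_le_exp_neg' {p : ℝ} (hp1 : p ≤ 1) (k : ℕ) :
    (1 - p) ^ k ≤ Real.exp (-(k * p)) := by
  calc (1 - p) ^ k ≤ Real.exp (-p) ^ k := by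
        apply pow_le_pow_left₀ (by linarith)
        linarith [Real.add_one_le_exp (-p)]
    _ = Real.exp (-(k * p)) := by
        rw [← Real.exp_nat_mul]; ring_nf

lemma bernoulli_low' {p : ℝ} (hp1 : p ≤ 2) (k : ℕ) :
    1 - k * p ≤ (1 - p) ^ k := by
  have := one_add_mul_le_pow (a := -p) (by linarith) k
  calc 1 - k*p = 1 + k * (-p) := by ring
    _ ≤ (1 + -p)^k := this
    _ = (1-p)^k := by ring_nf

lemma sq_half_le_exp' {x : ℝ} (h0 : 0 ≤ x) : (1 + x/2)^2 ≤ Real.exp x := by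
  have h := Real.add_one_le_exp (x/2)
  have e : Real.exp (x/2) * Real.exp (x/2) = Real.exp x := by
    rw [← Real.exp_add]; ring_nf
  nlinarith [Real.exp_pos (x/2)]

lemma exp_neg_le_inv' {x : ℝ} (h0 : 0 ≤ x) : Real.exp (-x) ≤ 1/(1+x) := by
  rw [Real.exp_neg, one_div]
  exact inv_anti₀ (by linarith) (by linarith [Real.add_one_le_exp x])

lemma exp_neg_le_lin' {x : ℝ} (h0 : 0 ≤ x) (h1 : x ≤ 1) :
    Real.exp (-x) ≤ 1 - 0.51 * x := by
  have h2 := sq_half_le_exp' h0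
  have key : 1 ≤ (1 - 0.51*x) * Real.exp x := by
    nlinarith [mul_le_mul_of_nonneg_left h2 (by linarith : (0:ℝ) ≤ 1 - 0.51*x),
      sq_nonneg x, mul_nonneg h0 (by linarith : (0:ℝ) ≤ 1 - x)]
  have e : Real.exp (-x) * Real.exp x = 1 := by
    rw [← Real.exp_add]; simp
  nlinarith [Real.exp_pos x]

set_option maxHeartbeats 1000000 in
lemma main_aux (n m : ℕ) (p : ℝ) (hp0 : 0 < p) (hp1 : p < 1) (hn : 1000 ≤ n) :
    (40 < (n : ℝ) * p →
      0.9 * ((m : ℝ) * p) ≤ d0 n m p ∧ d0 n m p ≤ (m : ℝ) * p) ∧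
    ((n : ℝ) * p ≤ 40 →
      d0 n m p ≤ d1 n m p ∧ d1 n m p ≤ 40.1 * d0 n m p) ∧
    d1 n m p ≤ 2 * d0 n m p * max ((n : ℝ) * p) 1 := by
  have hN : (1000 : ℝ) ≤ (n : ℝ) := by exact_mod_cast hn
  have hcast : ((n - 1 : ℕ) : ℝ) = (n : ℝ) - 1 := by
    rw [Nat.cast_sub (by omega)]; simp
  set N : ℝ := (n : ℝ) with hNdef
  set M : ℝ := (m : ℝ) with hMdef
  have hM : (0 : ℝ) ≤ M := Nat.cast_nonneg m
  have hMP : (0 : ℝ) ≤ M * p := mul_nonneg hM hp0.le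
  set x : ℝ := (N - 1) * p with hxdef
  have hx0 : 0 ≤ x := mul_nonneg (by linarith) hp0.le
  have hxp : N * p = x + p := by ring
  have hp999 : 999 * p ≤ x := by
    have : (999 : ℝ) ≤ N - 1 := by linarith
    nlinarith
  set q : ℝ := (1 - p) ^ (n - 1) with hqdef
  have hq0 : 0 ≤ q := pow_nonneg (by linarith) _
  have hq1 : q ≤ 1 := pow_le_one₀ (by linarith) (by linarith)
  set E : ℝ := Real.exp (-x) with hEdef
  have hE0 : 0 < E := Real.exp_pos _
  have hqE : q ≤ E := by
    have := pow_le_exp_neg' hp1.le (n - 1)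
    rwa [hcast] at this
  have hd0 : d0 n m p = M * p * (1 - q) := rfl
  have hd1 : d1 n m p = N * M * p ^ 2 := rfl
  refine ⟨?_, ?_, ?_⟩
  · -- np > 40
    intro h40
    have hx39 : 39 ≤ x := by rw [hxdef]; nlinarith
    have hE1 : E ≤ 1 / (1 + x) := exp_neg_le_inv' hx0
    have hE2 : (1:ℝ) / (1 + x) ≤ 0.1 := by
      rw [div_le_iff₀ (by linarith)]; linarith
    have hq01 : q ≤ 0.1 := by linarith
    constructor
    · rw [hd0]; nlinarith
    · rw [hd0]; nlinarith
  · -- np ≤ 40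
    intro h40
    have key : N * p ≤ 40.1 * (1 - q) := by
      by_cases hx39 : x ≤ 39.05
      · have hinv := exp_neg_le_inv' hx0
        have h1 : x ≤ (1 - E) * (1 + x) := by
          have := (le_div_iff₀ (by linarith : (0:ℝ) < 1 + x)).1 hinv
          nlinarith
        have h2 : (x + p) * (1 + x) ≤ 40.1 * x := by
          nlinarith [mul_nonneg (by linarith : (0:ℝ) ≤ 39.05 - x) hx0,
            mul_nonneg hp0.le (by linarith : (0:ℝ) ≤ 39.05 - x)]
        have h3 : x + p ≤ 40.1 * (1 - E) := by
          nlinarith [mul_le_mul_of_nonneg_left h1 (by norm_num : (0:ℝ) ≤ 40.1)]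
        rw [hxp]; linarith
      · push_neg at hx39
        have h2 := sq_half_le_exp' hx0
        have hex : (421 : ℝ) ≤ Real.exp x := by nlinarith
        have he : E * Real.exp x = 1 := by
          rw [hEdef, ← Real.exp_add]; simp
        have hE421 : E ≤ 1 / 421 := by
          nlinarith [mul_nonneg hE0.le (by linarith : (0:ℝ) ≤ Real.exp x - 421)]
        nlinarith
    constructor
    · rw [hd0, hd1]
      have h1 : 1 - q ≤ x + p := by
        have := bernoulli_low' (p := p) (by linarith) (n - 1)
        rw [hcast] at this
        nlinarith
      nlinarith
    · rw [hd0, hd1]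
      nlinarith [mul_le_mul_of_nonneg_left key hMP]
  · -- d1 ≤ 2 d0 max
    have hmax1 : (1:ℝ) ≤ max (N * p) 1 := le_max_right _ _
    have hmaxnp : N * p ≤ max (N * p) 1 := le_max_left _ _
    have key : N * p ≤ 2 * (1 - q) * max (N * p) 1 := by
      by_cases hx1 : x ≤ 1
      · have hlin := exp_neg_le_lin' hx0 hx1
        have hr : 0.51 * x ≤ 1 - q := by linarith
        have hnp : N * p ≤ 1.02 * x := by rw [hxp]; linarith
        calc N * p ≤ 1.02 * x := hnp
          _ ≤ 2 * (1 - q) * 1 := by linarith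
          _ ≤ 2 * (1 - q) * max (N * p) 1 := by
              apply mul_le_mul_of_nonneg_left hmax1 (by linarith)
      · push_neg at hx1
        have hinv := exp_neg_le_inv' hx0
        have hE2 : E ≤ 1/2 := by
          have : (1:ℝ)/(1+x) ≤ 1/2 := by
            rw [div_le_div_iff₀ (by linarith) (by norm_num)]; linarith
          linarith
        have hr : (1:ℝ)/2 ≤ 1 - q := by linarith
        calc N * p ≤ max (N * p) 1 := hmaxnp
          _ = 2 * (1/2) * max (N * p) 1 := by ring
          _ ≤ 2 * (1 - q) * max (N * p) 1 := by
              apply mul_le_mul_of_nonneg_right (by linarith)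
                (le_trans zero_le_one hmax1)
    rw [hd0, hd1]
    nlinarith [mul_le_mul_of_nonneg_left key hMP]

theorem d0_d1_relations (m : ℕ → ℕ) (p : ℕ → ℝ)
    (hp : ∀ n, p n ∈ Set.Ioo (0 : ℝ) 1) :
    (∀ n, d0 n (m n) (p n) ≤ (m n : ℝ) * p n) ∧
    (∀ n, d0 n (m n) (p n) ≤ d1 n (m n) (p n)) ∧
    (∀ n, d0 n (m n) (p n) ≤ (m n : ℝ) * p n * min ((n : ℝ) * p n) 1) ∧
    (∀ᶠ (n : ℕ) in atTop,
      (40 < (n : ℝ) * p n →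
        0.9 * ((m n : ℝ) * p n) ≤ d0 n (m n) (p n) ∧ d0 n (m n) (p n) ≤ (m n : ℝ) * p n) ∧
      ((n : ℝ) * p n ≤ 40 →
        d0 n (m n) (p n) ≤ d1 n (m n) (p n) ∧ d1 n (m n) (p n) ≤ 40.1 * d0 n (m n) (p n)) ∧
      d1 n (m n) (p n) ≤ 2 * d0 n (m n) (p n) * max ((n : ℝ) * p n) 1) := by
  obtain ⟨A, B, C⟩ : (∀ n : ℕ, ∀ m : ℕ, ∀ pp : ℝ, 0 < pp → pp < 1 →
      d0 n m pp ≤ (m : ℝ) * pp) ∧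
      (∀ n : ℕ, ∀ m : ℕ, ∀ pp : ℝ, 0 < pp → pp < 1 → d0 n m pp ≤ d1 n m pp) ∧
      (∀ n : ℕ, ∀ m : ℕ, ∀ pp : ℝ, 0 < pp → pp < 1 →
        d0 n m pp ≤ (m : ℝ) * pp * min ((n : ℝ) * pp) 1) := by
    have base : ∀ n : ℕ, ∀ m : ℕ, ∀ pp : ℝ, 0 < pp → pp < 1 →
        0 ≤ (1 - pp) ^ (n - 1) ∧ 1 - (1 - pp) ^ (n - 1) ≤ (n : ℝ) * pp := by
      intro n m pp h0 h1
      refine ⟨pow_nonneg (by linarith) _, ?_⟩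
      have hb := bernoulli_low' (p := pp) (by linarith) (n - 1)
      have hc : ((n - 1 : ℕ) : ℝ) ≤ (n : ℝ) := by exact_mod_cast Nat.sub_le n 1
      nlinarith
    refine ⟨?_, ?_, ?_⟩ <;> intro n m pp h0 h1 <;>
      obtain ⟨hq0, hbnd⟩ := base n m pp h0 h1 <;>
      have hMP : (0 : ℝ) ≤ (m : ℝ) * pp := mul_nonneg (Nat.cast_nonneg m) h0.le
    · show (m : ℝ) * pp * (1 - (1 - pp) ^ (n - 1)) ≤ (m : ℝ) * pp
      nlinarith [mul_nonneg hMP hq0]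
    · show (m : ℝ) * pp * (1 - (1 - pp) ^ (n - 1)) ≤ (n : ℝ) * m * pp ^ 2
      nlinarith [mul_le_mul_of_nonneg_left hbnd hMP]
    · show (m : ℝ) * pp * (1 - (1 - pp) ^ (n - 1)) ≤
        (m : ℝ) * pp * min ((n : ℝ) * pp) 1
      have hq1 : (1 - pp) ^ (n - 1) ≥ 0 := hq0
      exact mul_le_mul_of_nonneg_left (le_min hbnd (by linarith)) hMP
  refine ⟨fun n => A n (m n) (p n) (hp n).1 (hp n).2,
    fun n => B n (m n) (p n) (hp n).1 (hp n).2,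
    fun n => C n (m n) (p n) (hp n).1 (hp n).2, ?_⟩
  exact Filter.eventually_atTop.2
    ⟨1000, fun n hn => main_aux n (m n) (p n) (hp n).1 (hp n).2 hn⟩
end

section
/- Assume n ≤ m and liminf_{n→∞} mp/ln n ≥ 1 (i.e., mp ≥ (1+o(1)) ln n). Then for all sufficiently large n, the probability that there exists a set S ⊆ V of size |S| = n/5000 with W(S) ≤ 0.3·m·min{np/5000, 1} is at most exp(-0.04·n). -/
open MeasureTheory Filter

namespace RIGaux
instance (p : ℝ) : IsProbabilityMeasure (bern p) := PMF.toMeasure.isProbabilityMeasure _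
instance (n m : ℕ) (p : ℝ) : IsProbabilityMeasure (rig n m p) := by
  rw [rig]; infer_instance

noncomputable def wt (n m : ℕ) (p : ℝ) (ω : Fin n → Fin m → Bool) : ℝ :=
  ∏ v, ∏ w, (if ω v w then p else 1 - p)

lemma wt_nonneg {n m : ℕ} {p : ℝ} (h0 : 0 ≤ p) (h1 : p ≤ 1) (ω : Fin n → Fin m → Bool) :
    0 ≤ wt n m p ω :=
  Finset.prod_nonneg fun _ _ => Finset.prod_nonneg fun _ _ => by
    split <;> linarith

lemma bern_singleton {p : ℝ} (h0 : 0 ≤ p) (h1 : p ≤ 1) (b : Bool) :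
    bern p {b} = ENNReal.ofReal (if b then p else 1 - p) := by
  rw [bern, PMF.toMeasure_apply_singleton _ _ (measurableSet_singleton b),
    PMF.bernoulli_apply]
  have : min (Real.toNNReal p) 1 = Real.toNNReal p :=
    min_eq_left (Real.toNNReal_le_one.2 h1)
  rw [this]
  cases b
  · change (1 : ENNReal) - ENNReal.ofReal p = _
    simp only [Bool.false_eq_true, if_false]
    rw [← ENNReal.ofReal_one, ← ENNReal.ofReal_sub _ h0]
  · rfl

lemma rig_singleton {n m : ℕ} {p : ℝ} (h0 : 0 ≤ p) (h1 : p ≤ 1)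
    (ω : Fin n → Fin m → Bool) :
    rig n m p {ω} = ENNReal.ofReal (wt n m p ω) := by
  have : rig n m p {ω} = ∏ v, ∏ w, bern p {ω v w} := by
    rw [rig, show ({ω} : Set (Fin n → Fin m → Bool)) = Set.pi Set.univ (fun v => {ω v}) by
      ext; simp [funext_iff, Set.mem_pi], Measure.pi_pi]
    congr 1; ext v
    rw [show ({ω v} : Set (Fin m → Bool)) = Set.pi Set.univ (fun w => {ω v w}) by
      ext; simp [funext_iff, Set.mem_pi], Measure.pi_pi]
  rw [this, wt]
  rw [ENNReal.ofReal_prod_of_nonneg (fun _ _ => Finset.prod_nonneg fun _ _ => by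
    split <;> linarith)]
  refine Finset.prod_congr rfl fun v _ => ?_
  rw [ENNReal.ofReal_prod_of_nonneg (fun _ _ => by split <;> linarith)]
  exact Finset.prod_congr rfl fun w _ => bern_singleton h0 h1 _

open scoped Classical in
lemma rig_set {n m : ℕ} {p : ℝ} (h0 : 0 ≤ p) (h1 : p ≤ 1)
    (s : Set (Fin n → Fin m → Bool)) :
    rig n m p s = ENNReal.ofReal (∑ ω ∈ Finset.univ.filter (· ∈ s), wt n m p ω) := by
  have hs : s = ⋃ ω ∈ Finset.univ.filter (· ∈ s), ({ω} : Set _) := by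
    ext ω; simp
  nth_rewrite 1 [hs]
  rw [measure_biUnion_finset ?_ (fun _ _ => (Set.countable_singleton _).measurableSet)]
  · rw [ENNReal.ofReal_sum_of_nonneg (fun ω _ => wt_nonneg h0 h1 ω)]
    exact Finset.sum_congr rfl fun ω _ => rig_singleton h0 h1 ω
  · intro x _ y _ hxy
    simp [Function.onFun, Set.disjoint_singleton, hxy]

open scoped Classical in
lemma WS_sum {n m : ℕ} (ω : Fin n → Fin m → Bool) (S : Set (Fin n)) :
    (WS ω S : ℝ) = ∑ w, (if ∃ v ∈ S, ω v w = true then (1:ℝ) else 0) := by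
  rw [WS, Set.ncard_eq_toFinset_card', Set.toFinset_setOf, Finset.card_filter]
  push_cast
  exact Finset.sum_congr rfl fun w _ => by split <;> simp

noncomputable def colwt (n : ℕ) (p : ℝ) (c : Fin n → Bool) : ℝ :=
  ∏ v, (if c v then p else 1 - p)

open scoped Classical in
noncomputable def colg (n : ℕ) (p : ℝ) (S : Finset (Fin n)) (c : Fin n → Bool) : ℝ :=
  colwt n p c * (if ∃ v ∈ S, c v = true then 1/2 else 1)

lemma sum_colwt {n : ℕ} (p : ℝ) : ∑ c : Fin n → Bool, colwt n p c = 1 := by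
  have := Finset.sum_prod_piFinset (Finset.univ : Finset Bool)
    (fun (v : Fin n) (b : Bool) => if b then p else 1 - p)
  rw [Fintype.piFinset_univ] at this
  rw [show (fun c => colwt n p c) = fun c => ∏ v, (if c v then p else 1 - p) from rfl]
  rw [this]
  simp

open scoped Classical in
lemma sum_colwt_miss {n : ℕ} (p : ℝ) (h0 : 0 ≤ p) (h1 : p ≤ 1) (S : Finset (Fin n)) :
    ∑ c : Fin n → Bool, colwt n p c * (if ∃ v ∈ S, c v = true then 0 else 1)
      = (1 - p) ^ S.card := by
  have step : ∀ c : Fin n → Bool, colwt n p c * (if ∃ v ∈ S, c v = true then (0:ℝ) else 1)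
      = ∏ v, (if v ∈ S ∧ c v = true then 0 else (if c v then p else 1 - p)) := by
    intro c
    by_cases h : ∃ v ∈ S, c v = true
    · obtain ⟨v, hv, hcv⟩ := h
      rw [if_pos ⟨v, hv, hcv⟩, mul_zero,
        Finset.prod_eq_zero (Finset.mem_univ v) (by rw [if_pos ⟨hv, hcv⟩])]
    · rw [if_neg h, mul_one, colwt]
      refine Finset.prod_congr rfl fun v _ => ?_
      refine (if_neg ?_).symm
      rintro ⟨hv, hcv⟩
      exact h ⟨v, hv, hcv⟩
  simp_rw [step]
  have := Finset.sum_prod_piFinset (Finset.univ : Finset Bool)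
    (fun (v : Fin n) (b : Bool) => if v ∈ S ∧ b = true then (0:ℝ) else (if b then p else 1 - p))
  rw [Fintype.piFinset_univ] at this
  rw [this]
  have : ∀ v : Fin n, (∑ b : Bool, if v ∈ S ∧ b = true then (0:ℝ) else (if b then p else 1 - p))
      = if v ∈ S then 1 - p else 1 := by
    intro v
    by_cases hv : v ∈ S <;> simp [hv] <;> ring
  simp_rw [this]
  rw [Finset.prod_ite_mem, Finset.univ_inter, Finset.prod_const]

open scoped Classical in
lemma sum_colg {n : ℕ} (p : ℝ) (h0 : 0 ≤ p) (h1 : p ≤ 1) (S : Finset (Fin n)) :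
    ∑ c : Fin n → Bool, colg n p S c = 1/2 + 1/2 * (1 - p) ^ S.card := by
  have step : ∀ c : Fin n → Bool, colg n p S c
      = 1/2 * colwt n p c + 1/2 * (colwt n p c * (if ∃ v ∈ S, c v = true then 0 else 1)) := by
    intro c
    rw [colg]
    split <;> ring
  simp_rw [step]
  rw [Finset.sum_add_distrib, ← Finset.mul_sum, ← Finset.mul_sum, sum_colwt,
    sum_colwt_miss p h0 h1 S]
  ring

open scoped Classical in
lemma factorization {n m : ℕ} (p : ℝ) (h0 : 0 ≤ p) (h1 : p ≤ 1) (S : Finset (Fin n)) :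
    ∑ ω : Fin n → Fin m → Bool, wt n m p ω * Real.exp (-(Real.log 2) * (WS ω ↑S))
      = (1/2 + 1/2 * (1 - p) ^ S.card) ^ m := by
  have term : ∀ ω : Fin n → Fin m → Bool,
      wt n m p ω * Real.exp (-(Real.log 2) * (WS ω ↑S))
        = ∏ w, colg n p S (fun v => ω v w) := by
    intro ω
    have h2 : Real.exp (-(Real.log 2)) = 1/2 := by
      rw [Real.exp_neg, Real.exp_log (by norm_num)]; norm_num
    have hws : Real.exp (-(Real.log 2) * (WS ω ↑S))
        = ∏ w, (if ∃ v ∈ (↑S : Set (Fin n)), ω v w = true then (1:ℝ)/2 else 1) := by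
      rw [WS_sum ω ↑S, Finset.mul_sum, Real.exp_sum]
      refine Finset.prod_congr rfl fun w _ => ?_
      split
      · rw [mul_one, h2]
      · rw [mul_zero, Real.exp_zero]
    rw [hws, wt, Finset.prod_comm, ← Finset.prod_mul_distrib]
    refine Finset.prod_congr rfl fun w _ => ?_
    rw [colg, colwt]
    congr 1
  simp_rw [term]
  have swap : ∑ ω : Fin n → Fin m → Bool, ∏ w, colg n p S (fun v => ω v w)
      = ∑ η : Fin m → Fin n → Bool, ∏ w, colg n p S (η w) :=
    Fintype.sum_equiv (Equiv.piComm _) _ _ (fun ω => rfl)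
  rw [swap]
  have := Finset.sum_prod_piFinset (Finset.univ : Finset (Fin n → Bool))
    (fun (_ : Fin m) (c : Fin n → Bool) => colg n p S c)
  rw [Fintype.piFinset_univ] at this
  rw [this, sum_colg p h0 h1 S, Finset.prod_const, Finset.card_univ, Fintype.card_fin]

open scoped Classical in
lemma chernoff {n m : ℕ} (p : ℝ) (h0 : 0 ≤ p) (h1 : p ≤ 1) (S : Finset (Fin n))
    (t : ℝ) (ht : 0 ≤ t) :
    rig n m p {ω | (WS ω ↑S : ℝ) ≤ t}
      ≤ ENNReal.ofReal (Real.exp (Real.log 2 * t) * (1/2 + 1/2 * (1 - p) ^ S.card) ^ m) := by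
  rw [rig_set h0 h1]
  apply ENNReal.ofReal_le_ofReal
  have hl2 : (0:ℝ) ≤ Real.log 2 := Real.log_nonneg (by norm_num)
  calc ∑ ω ∈ Finset.univ.filter (· ∈ {ω : Fin n → Fin m → Bool | (WS ω ↑S : ℝ) ≤ t}),
      wt n m p ω
      ≤ ∑ ω ∈ Finset.univ.filter (· ∈ {ω : Fin n → Fin m → Bool | (WS ω ↑S : ℝ) ≤ t}),
          wt n m p ω * (Real.exp (Real.log 2 * t) * Real.exp (-(Real.log 2) * (WS ω ↑S))) := by
        refine Finset.sum_le_sum fun ω hω => le_mul_of_one_le_right (wt_nonneg h0 h1 ω) ?_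
        rw [← Real.exp_add]
        refine Real.one_le_exp ?_
        have hωt : (WS ω ↑S : ℝ) ≤ t := by
          simpa using (Finset.mem_filter.1 hω).2
        nlinarith
    _ ≤ ∑ ω : Fin n → Fin m → Bool,
          wt n m p ω * (Real.exp (Real.log 2 * t) * Real.exp (-(Real.log 2) * (WS ω ↑S))) := by
        refine Finset.sum_le_sum_of_subset_of_nonneg (Finset.subset_univ _) fun ω _ _ => ?_
        have := wt_nonneg (n := n) (m := m) h0 h1 ω
        positivity
    _ = Real.exp (Real.log 2 * t) * ∑ ω : Fin n → Fin m → Bool,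
          wt n m p ω * Real.exp (-(Real.log 2) * (WS ω ↑S)) := by
        rw [Finset.mul_sum]
        exact Finset.sum_congr rfl fun ω _ => by ring
    _ = Real.exp (Real.log 2 * t) * (1/2 + 1/2 * (1 - p) ^ S.card) ^ m := by
        rw [factorization p h0 h1 S]

lemma choose_le_exp (n k : ℕ) (hk : 1 ≤ k) (hnk : (n:ℝ) ≤ 5001 * k) :
    (n.choose k : ℝ) ≤ Real.exp (10 * k) := by
  have hkpos : (0:ℝ) < k := by exact_mod_cast hk
  have hfac : (0:ℝ) < k.factorial := by exact_mod_cast k.factorial_pos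
  have h1 : (n.choose k : ℝ) ≤ (n:ℝ)^k / k.factorial := Nat.choose_le_pow_div k n
  have h2 : (k:ℝ)^k ≤ Real.exp k * k.factorial := by
    have hs := Real.sum_le_exp_of_nonneg (x := (k:ℝ)) (by positivity) (k+1)
    have hterm : (k:ℝ)^k / k.factorial ≤ Real.exp k :=
      le_trans (Finset.single_le_sum (f := fun i => (k:ℝ)^i / i.factorial)
        (fun i _ => by positivity) (Finset.self_mem_range_succ k)) hs
    rw [div_le_iff₀ hfac] at hterm
    linarith
  have h3 : (n:ℝ)^k ≤ 5001^k * (k:ℝ)^k := by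
    rw [← mul_pow]
    exact pow_le_pow_left₀ (by positivity) hnk k
  have h5001 : (5001:ℝ) ≤ Real.exp 9 := by
    have : ((2.7182818283:ℝ))^(9:ℕ) ≤ (Real.exp 1)^(9:ℕ) :=
      pow_le_pow_left₀ (by norm_num) Real.exp_one_gt_d9.le 9
    have h9 : Real.exp 9 = (Real.exp 1)^(9:ℕ) := by
      rw [← Real.exp_nat_mul]; norm_num
    rw [h9]
    nlinarith [this]
  calc (n.choose k : ℝ) ≤ (n:ℝ)^k / k.factorial := h1
    _ ≤ (5001^k * (k:ℝ)^k) / k.factorial := by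
        gcongr
    _ ≤ (5001^k * (Real.exp k * k.factorial)) / k.factorial := by
        gcongr
    _ = 5001^k * Real.exp k := by
        rw [mul_div_assoc, mul_div_assoc, div_self (ne_of_gt hfac), mul_one]
    _ ≤ (Real.exp 9)^k * Real.exp k := by
        apply mul_le_mul_of_nonneg_right (pow_le_pow_left₀ (by norm_num) h5001 k) (le_of_lt (Real.exp_pos _))
    _ = Real.exp (10 * k) := by
        rw [← Real.exp_nat_mul, ← Real.exp_add]
        congr 1; push_cast; ring

lemma one_sub_exp_neg_ge {x : ℝ} (hx : 0 ≤ x) :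
    (1 - Real.exp (-1)) * min x 1 ≤ 1 - Real.exp (-x) := by
  rcases le_or_gt x 1 with h | h
  · rw [min_eq_left h]
    have hc : Real.exp ((1-x) • (0:ℝ) + x • (-1:ℝ))
        ≤ (1-x) • Real.exp 0 + x • Real.exp (-1) :=
      convexOn_exp.2 (Set.mem_univ (0:ℝ)) (Set.mem_univ (-1:ℝ)) (by linarith) hx (by ring)
    simp only [smul_eq_mul, mul_zero, mul_neg, mul_one, Real.exp_zero, zero_add] at hc
    nlinarith [hc]
  · rw [min_eq_right h.le]
    have := Real.exp_le_exp.2 (neg_le_neg h.le)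
    linarith

set_option maxHeartbeats 2000000 in
open scoped Classical in
lemma main_single (n m : ℕ) (p : ℝ) (hp0 : 0 < p) (hp1 : p < 1) (hnm : n ≤ m)
    (hmp : Real.log n / 2 ≤ (m:ℝ) * p) (hln : 3950 ≤ Real.log n) :
    (rig n m p {ω | ∃ S : Set (Fin n), S.ncard = n / 5000 ∧
        (WS ω S : ℝ) ≤ 0.3 * (m : ℝ) * min ((n : ℝ) * p / 5000) 1}).toReal
      ≤ Real.exp (-0.04 * n) := by
  -- n is huge
  have hn0 : 0 < n := by
    rcases Nat.eq_zero_or_pos n with h | h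
    · exfalso; rw [h] at hln; norm_num at hln
    · exact h
  have hnR : (3950:ℝ)^3/6 ≤ (n:ℝ) := by
    have hsum := Real.sum_le_exp_of_nonneg (x := (3950:ℝ)) (by norm_num) 4
    have hterm : (3950:ℝ)^3/6 ≤ ∑ i ∈ Finset.range 4, (3950:ℝ)^i / i.factorial := by
      rw [Finset.sum_range_succ, Finset.sum_range_succ, Finset.sum_range_succ,
        Finset.sum_range_succ, Finset.sum_range_zero]
      norm_num [Nat.factorial]
    calc (3950:ℝ)^3/6 ≤ Real.exp 3950 := hterm.trans hsum
      _ ≤ Real.exp (Real.log n) := Real.exp_le_exp.2 hln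
      _ = n := Real.exp_log (by exact_mod_cast hn0)
  have hnbig : (10:ℝ)^10 ≤ (n:ℝ) := by nlinarith
  set k : ℕ := n / 5000 with hk
  set K : ℝ := (k : ℝ) with hK
  -- division facts
  have hdm := Nat.div_add_mod n 5000
  have hmod : n % 5000 < 5000 := Nat.mod_lt _ (by norm_num)
  have hnk : (n:ℝ) = 5000 * K + (n % 5000 : ℕ) := by
    rw [hK, hk]; exact_mod_cast (by omega : n = 5000 * (n/5000) + n % 5000)
  have hmodR : ((n % 5000 : ℕ) : ℝ) < 5000 := by exact_mod_cast hmod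
  have hmodR0 : (0:ℝ) ≤ ((n % 5000 : ℕ) : ℝ) := by positivity
  have hKlow : 0.9998 * ((n:ℝ)/5000) ≤ K := by nlinarith
  have hKup : K ≤ (n:ℝ)/5000 := by nlinarith
  have hk1 : 1 ≤ k := by
    rw [hk]
    have : 5000 ≤ n := by exact_mod_cast (by nlinarith : (5000:ℝ) ≤ (n:ℝ))
    omega
  have hn5001 : (n:ℝ) ≤ 5001 * K := by
    have hK1 : (1:ℝ) ≤ K := by rw [hK]; exact_mod_cast hk1
    nlinarith
  set T : ℝ := min ((n : ℝ) * p / 5000) 1 with hT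
  have hT0 : 0 ≤ T := le_min (by positivity) zero_le_one
  have hT1 : T ≤ 1 := min_le_right _ _
  set t : ℝ := 0.3 * (m : ℝ) * T with ht
  have ht0 : 0 ≤ t := by positivity
  -- union bound
  have hsub : {ω : Fin n → Fin m → Bool | ∃ S : Set (Fin n), S.ncard = k ∧
      (WS ω S : ℝ) ≤ t} ⊆
      ⋃ F ∈ Finset.powersetCard k (Finset.univ : Finset (Fin n)),
        {ω : Fin n → Fin m → Bool | (WS ω ↑F : ℝ) ≤ t} := by
    rintro ω ⟨S, hS, hWSle⟩
    simp only [Set.mem_iUnion]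
    refine ⟨S.toFinset, ?_, ?_⟩
    · rw [Finset.mem_powersetCard]
      exact ⟨Finset.subset_univ _, by rw [← Set.ncard_eq_toFinset_card']; exact hS⟩
    · simpa [Set.coe_toFinset] using hWSle
  have hq : 0.6318 * T ≤ 1 - (1 - p)^k := by
    have h1p : (0:ℝ) ≤ 1 - p := by linarith
    have hpk : (1 - p)^k ≤ Real.exp (-(K * p)) := by
      calc (1 - p)^k ≤ (Real.exp (-p))^k :=
            pow_le_pow_left₀ h1p (by linarith [Real.add_one_le_exp (-p)]) k
        _ = Real.exp (-(K * p)) := by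
            rw [← Real.exp_nat_mul]; congr 1; rw [hK]; ring
    have htail := one_sub_exp_neg_ge (x := K * p) (by positivity)
    have hemin : Real.exp (-1) ≤ 0.368 := by
      rw [Real.exp_neg]
      rw [inv_le_comm₀ (Real.exp_pos 1) (by norm_num)]
      calc (0.368:ℝ)⁻¹ ≤ 2.7182818283 := by norm_num
        _ ≤ Real.exp 1 := Real.exp_one_gt_d9.le
    have hminT : 0.9998 * T ≤ min (K * p) 1 := by
      refine le_min ?_ ?_
      · calc 0.9998 * T ≤ 0.9998 * ((n:ℝ) * p / 5000) :=
              mul_le_mul_of_nonneg_left (min_le_left _ _) (by norm_num)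
          _ = (0.9998 * ((n:ℝ)/5000)) * p := by ring
          _ ≤ K * p := mul_le_mul_of_nonneg_right hKlow hp0.le
      · calc 0.9998 * T ≤ 0.9998 * 1 := mul_le_mul_of_nonneg_left hT1 (by norm_num)
          _ = 0.9998 := by norm_num
          _ ≤ 1 := by norm_num
    nlinarith [htail, hminT, hpk, hT0]
  -- per-set Chernoff bound with numerics
  have hB : Real.exp (Real.log 2 * t) * (1/2 + 1/2 * (1 - p) ^ k) ^ m
      ≤ Real.exp (Real.log 2 * t - (m:ℝ) * (1 - (1-p)^k) / 2) := by
    have hbase : 1/2 + 1/2 * (1 - p) ^ k ≤ Real.exp (-(1 - (1-p)^k)/2) := by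
      have := Real.add_one_le_exp (-(1 - (1-p)^k)/2)
      linarith
    have hbase0 : (0:ℝ) ≤ 1/2 + 1/2 * (1 - p) ^ k := by
      have : (0:ℝ) ≤ (1-p)^k := pow_nonneg (by linarith) k
      linarith
    calc Real.exp (Real.log 2 * t) * (1/2 + 1/2 * (1 - p) ^ k) ^ m
        ≤ Real.exp (Real.log 2 * t) * (Real.exp (-(1 - (1-p)^k)/2)) ^ m := by
          gcongr
      _ = Real.exp (Real.log 2 * t - (m:ℝ) * (1 - (1-p)^k) / 2) := by
          rw [← Real.exp_nat_mul, ← Real.exp_add]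
          congr 1; ring
  -- final numeric exponent bound
  have hexp : (10:ℝ) * k + (Real.log 2 * t - (m:ℝ) * (1 - (1-p)^k) / 2)
      ≤ -0.04 * n := by
    have hlog2 : Real.log 2 ≤ 0.6932 := by linarith [Real.log_two_lt_d9]
    have hlog2n : (0:ℝ) ≤ Real.log 2 := Real.log_nonneg (by norm_num)
    have hMT0 : (0:ℝ) ≤ (m:ℝ) * T := by positivity
    have h1 : Real.log 2 * t ≤ 0.20796 * ((m:ℝ) * T) := by
      rw [ht]
      linarith [mul_le_mul_of_nonneg_right hlog2 hMT0]
    have h2 : (m:ℝ) * (1 - (1-p)^k) / 2 ≥ 0.3159 * ((m:ℝ) * T) := by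
      have hm0 : (0:ℝ) ≤ (m:ℝ) := by positivity
      linarith [mul_le_mul_of_nonneg_left hq hm0]
    have h3 : (10:ℝ) * k ≤ 0.002 * n := by
      have hkK : (k:ℝ) = K := hK.symm
      rw [hkK]
      nlinarith [hKup]
    have hcase : 0.395 * (n:ℝ) ≤ (m:ℝ) * T := by
      rcases le_or_gt 1 ((n : ℝ) * p / 5000) with hc | hc
      · have : T = 1 := min_eq_right hc
        rw [this, mul_one]
        have : (n:ℝ) ≤ (m:ℝ) := by exact_mod_cast hnm
        linarith
      · have hTeq : T = (n : ℝ) * p / 5000 := min_eq_left hc.le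
        rw [hTeq]
        have : (m:ℝ) * ((n:ℝ) * p / 5000) = ((m:ℝ) * p) * ((n:ℝ)/5000) := by ring
        rw [this]
        have hmp' : Real.log n / 2 ≤ (m:ℝ) * p := hmp
        have hlog : (3950:ℝ) ≤ Real.log n := hln
        have hn0' : (0:ℝ) ≤ (n:ℝ)/5000 := by positivity
        calc 0.395 * (n:ℝ) = 1975 * ((n:ℝ)/5000) := by ring
          _ ≤ (Real.log n / 2) * ((n:ℝ)/5000) := by
              apply mul_le_mul_of_nonneg_right _ hn0'
              linarith
          _ ≤ ((m:ℝ) * p) * ((n:ℝ)/5000) := mul_le_mul_of_nonneg_right hmp' hn0'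
    nlinarith [hMT0]
  -- assemble
  have hmeas : rig n m p {ω : Fin n → Fin m → Bool | ∃ S : Set (Fin n), S.ncard = k ∧
      (WS ω S : ℝ) ≤ t} ≤ ENNReal.ofReal (Real.exp (-0.04 * n)) := by
    calc rig n m p _ ≤ rig n m p (⋃ F ∈ Finset.powersetCard k (Finset.univ : Finset (Fin n)),
          {ω : Fin n → Fin m → Bool | (WS ω ↑F : ℝ) ≤ t}) := measure_mono hsub
      _ ≤ ∑ F ∈ Finset.powersetCard k (Finset.univ : Finset (Fin n)),
            rig n m p {ω : Fin n → Fin m → Bool | (WS ω ↑F : ℝ) ≤ t} :=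
          measure_biUnion_finset_le _ _
      _ ≤ ∑ F ∈ Finset.powersetCard k (Finset.univ : Finset (Fin n)),
            ENNReal.ofReal (Real.exp (Real.log 2 * t) * (1/2 + 1/2 * (1 - p) ^ k) ^ m) := by
          refine Finset.sum_le_sum fun F hF => ?_
          have hcard : F.card = k := (Finset.mem_powersetCard.1 hF).2
          have := chernoff (n := n) (m := m) p hp0.le hp1.le F t ht0
          rwa [hcard] at this
      _ = (n.choose k : ENNReal) *
            ENNReal.ofReal (Real.exp (Real.log 2 * t) * (1/2 + 1/2 * (1 - p) ^ k) ^ m) := by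
          rw [Finset.sum_const, Finset.card_powersetCard, Finset.card_univ, Fintype.card_fin,
            nsmul_eq_mul]
      _ ≤ ENNReal.ofReal (Real.exp (-0.04 * n)) := by
          rw [← ENNReal.ofReal_natCast, ← ENNReal.ofReal_mul (by positivity)]
          apply ENNReal.ofReal_le_ofReal
          calc (n.choose k : ℝ) * (Real.exp (Real.log 2 * t) * (1/2 + 1/2 * (1 - p) ^ k) ^ m)
              ≤ Real.exp (10 * k) * Real.exp (Real.log 2 * t - (m:ℝ) * (1 - (1-p)^k) / 2) := by
                have hc := choose_le_exp n k hk1 hn5001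
                have hB0 : (0:ℝ) ≤ Real.exp (Real.log 2 * t) * (1/2 + 1/2 * (1 - p) ^ k) ^ m := by
                  have : (0:ℝ) ≤ (1-p)^k := pow_nonneg (by linarith) k
                  positivity
                exact mul_le_mul hc hB hB0 (Real.exp_pos _).le
            _ = Real.exp (10 * k + (Real.log 2 * t - (m:ℝ) * (1 - (1-p)^k) / 2)) := by
                rw [← Real.exp_add]
            _ ≤ Real.exp (-0.04 * n) := Real.exp_le_exp.2 hexp
  calc (rig n m p _).toReal
      ≤ (ENNReal.ofReal (Real.exp (-0.04 * n))).toReal :=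
        ENNReal.toReal_mono ENNReal.ofReal_ne_top hmeas
    _ = Real.exp (-0.04 * n) := ENNReal.toReal_ofReal (Real.exp_pos _).le

end RIGaux

theorem linear_sets_cover_features_m_large (m : ℕ → ℕ) (p : ℕ → ℝ)
    (hp : ∀ n, p n ∈ Set.Ioo (0 : ℝ) 1)
    (hnm : ∀ᶠ (n : ℕ) in atTop, n ≤ m n)
    (hmp : 1 ≤ Filter.liminf (fun (n : ℕ) => (m n : ℝ) * p n / Real.log n) atTop) :
    ∀ᶠ (n : ℕ) in atTop,
      (rig n (m n) (p n)
        {ω | ∃ S : Set (Fin n), S.ncard = n / 5000 ∧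
          (WS ω S : ℝ) ≤ 0.3 * (m n : ℝ) * min ((n : ℝ) * p n / 5000) 1}).toReal
      ≤ Real.exp (-0.04 * n) := by
  have hlog : ∀ᶠ (n : ℕ) in atTop, (3950:ℝ) ≤ Real.log n :=
    (Real.tendsto_log_atTop.comp tendsto_natCast_atTop_atTop).eventually_ge_atTop 3950
  have hu0 : ∀ᶠ (n : ℕ) in atTop, (0:ℝ) ≤ (m n : ℝ) * p n / Real.log n := by
    filter_upwards [Filter.eventually_ge_atTop 2] with n hn
    have hlogpos : 0 < Real.log n := Real.log_pos (by exact_mod_cast hn)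
    have hmn : (0:ℝ) ≤ (m n : ℝ) * p n :=
      mul_nonneg (Nat.cast_nonneg _) (hp n).1.le
    positivity
  have hhalf : ∀ᶠ (n : ℕ) in atTop, (1:ℝ)/2 < (m n : ℝ) * p n / Real.log n := by
    by_contra hcon
    rw [Filter.not_eventually] at hcon
    have hfreq : ∃ᶠ (n : ℕ) in atTop, (m n : ℝ) * p n / Real.log n ≤ 1/2 :=
      hcon.mono fun n h => not_lt.1 h
    have hbdd : Filter.IsBoundedUnder (· ≥ ·) atTop
        (fun (n : ℕ) => (m n : ℝ) * p n / Real.log n) :=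
      ⟨0, Filter.eventually_map.2 hu0⟩
    have := Filter.liminf_le_of_frequently_le hfreq hbdd
    linarith
  filter_upwards [hnm, hlog, hhalf] with n h1 h2 h3
  have hlogpos : 0 < Real.log n := by linarith
  have hev : Real.log n / 2 ≤ (m n : ℝ) * p n := by
    rw [lt_div_iff₀ hlogpos] at h3
    linarith
  exact RIGaux.main_single n (m n) (p n) (hp n).1 (hp n).2 h1 hev h2
end
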